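/- arXiv:2511.12638 — 7 statements merged into one kernel-verified Lean document; each statement's English description precedes it below -/
import Mathlib

section
/- One-step diamond property for the reflexive closure of the checked dynamics: letting ↪⁼ denote the reflexive closure of the checked small-step relation ↪ of the language L, if C ↪⁼ C₁ and C ↪⁼ C₂ then there exists a configuration C' with C₁ ↪⁼ C' and C₂ ↪⁼ C'. -/
namespace Volta

/-- Statements of the language `L` of structured-CTAs.  Constants are drawn
from a type `C`, registers from `Reg`, shared-memory addresses from `Addr`,
and thread IDs from `TID`. -/
inductive Stmt (C Reg Addr TID : Type) : Type where
  | const (r : Reg) (c : C)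
  | binop (r r₁ r₂ : Reg)
  | copy (r r' : Reg)
  | read (r : Reg) (g : Addr)
  | write (g : Addr) (r : Reg)
  | sync (I : Set TID)

/-- A thread program: a finite sequence of statements ending in `return`. -/
inductive ThreadProg (C Reg Addr TID : Type) : Type where
  | ret
  | seq (s : Stmt C Reg Addr TID) (T : ThreadProg C Reg Addr TID)

/-- A configuration: shared memory `G`, register files `R`, program `P`. -/
structure Config (Val C Reg Addr TID : Type) : Type where
  G : Addr → Val
  R : TID → Reg → Val
  P : TID → ThreadProg C Reg Addr TID

/-- Memory-event contexts: for each address, per reader the set of threads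
that have not synchronized with that read, and the last writer together with
the set of threads that have not synchronized with that write. -/
abbrev MemEvs (Addr TID : Type) : Type :=
  Addr → (TID → Set TID) × (TID × Set TID)

variable {Val C Reg Addr TID : Type}

/-- Thread `i` has synchronized with all readers as required. -/
def noRacingRd (i : TID) (rd : TID → Set TID) : Prop :=
  ∀ j, i = j ∨ i ∉ rd j

/-- Thread `i` is, or has synchronized with, the last writer as required. -/
def noRacingWr (i : TID) (wr : TID × Set TID) : Prop :=
  i = wr.1 ∨ i ∉ wr.2

open Classical in
/-- `sync I` removes `I` from the recorded unsynchronized sets belonging to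
threads of `I`. -/
noncomputable def syncMem (I : Set TID) (X : MemEvs Addr TID) : MemEvs Addr TID :=
  fun g =>
    (fun i => if i ∈ I then (X g).1 i \ I else (X g).1 i,
     if (X g).2.1 ∈ I then ((X g).2.1, (X g).2.2 \ I) else (X g).2)

/-- The initial memory-event context `X_∅`, whose recorded unsynchronized sets
are all empty (the choice of the recorded "last writer" `t₀` is arbitrary). -/
def emptyMemEvs (t₀ : TID) : MemEvs Addr TID :=
  fun _ => (fun _ => (∅ : Set TID), (t₀, (∅ : Set TID)))

section Dynamics

variable [DecidableEq Reg] [DecidableEq Addr] [DecidableEq TID]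
variable (op : Val → Val → Val) (κ : C → Val)

/-- Thread-level unchecked small-step relation. -/
inductive TStep :
    (Addr → Val) → (Reg → Val) → ThreadProg C Reg Addr TID →
    (Addr → Val) → (Reg → Val) → ThreadProg C Reg Addr TID → Prop where
  | const {G : Addr → Val} {R : Reg → Val} {r : Reg} {c : C} {T} :
      TStep G R (.seq (.const r c) T) G (Function.update R r (κ c)) T
  | binop {G : Addr → Val} {R : Reg → Val} {r r₁ r₂ : Reg} {T} :
      TStep G R (.seq (.binop r r₁ r₂) T) G (Function.update R r (op (R r₁) (R r₂))) T
  | copy {G : Addr → Val} {R : Reg → Val} {r r' : Reg} {T} :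
      TStep G R (.seq (.copy r r') T) G (Function.update R r (R r')) T
  | read {G : Addr → Val} {R : Reg → Val} {r : Reg} {g : Addr} {T} :
      TStep G R (.seq (.read r g) T) G (Function.update R r (G g)) T
  | write {G : Addr → Val} {R : Reg → Val} {g : Addr} {r : Reg} {T} :
      TStep G R (.seq (.write g r) T) (Function.update G g (R r)) R T

/-- Top-level unchecked small-step relation `→`:
rule `Schd` advances any single thread not blocked at a `sync`, and rule
`Sync`, when every thread of `I` is either at `sync I` or at `return`,
simultaneously advances all threads of `I` past their `sync`. -/
inductive Step : Config Val C Reg Addr TID → Config Val C Reg Addr TID → Prop where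
  | schd {c : Config Val C Reg Addr TID} {i : TID} {G' : Addr → Val}
      {R' : Reg → Val} {T' : ThreadProg C Reg Addr TID} :
      TStep op κ c.G (c.R i) (c.P i) G' R' T' →
      Step c ⟨G', Function.update c.R i R', Function.update c.P i T'⟩
  | sync {c : Config Val C Reg Addr TID} {I : Set TID}
      {P' : TID → ThreadProg C Reg Addr TID} :
      (∀ i ∉ I, P' i = c.P i) →
      (∀ i ∈ I, (c.P i = .ret ∧ P' i = .ret) ∨
        ∃ T, c.P i = .seq (.sync I) T ∧ P' i = T) →
      Step c ⟨c.G, c.R, P'⟩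

/-- `→*`: reflexive-transitive closure of the unchecked step relation. -/
def Steps : Config Val C Reg Addr TID → Config Val C Reg Addr TID → Prop :=
  Relation.ReflTransGen (Step op κ)

/-- Result of a checked thread-level step: a new configuration or the error `⊥`. -/
inductive CTRes (Val C Reg Addr TID : Type) : Type where
  | ok (X : MemEvs Addr TID) (G : Addr → Val) (R : Reg → Val)
      (T : ThreadProg C Reg Addr TID)
  | err

/-- Thread-level checked small-step relation `↪ᵢ`: a read by thread `i`
updates the reader entry of `i` to the set of all TIDs and requires
`noRacingWr`; a write by `i` requires both `noRacingRd` and `noRacingWr` and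
sets the writer record to `(i, univ)`; a read or write whose side condition
fails steps to the error `⊥`. -/
inductive CTStep (i : TID) :
    MemEvs Addr TID → (Addr → Val) → (Reg → Val) → ThreadProg C Reg Addr TID →
    CTRes Val C Reg Addr TID → Prop where
  | const {X : MemEvs Addr TID} {G : Addr → Val} {R : Reg → Val} {r : Reg} {c : C} {T} :
      CTStep i X G R (.seq (.const r c) T) (.ok X G (Function.update R r (κ c)) T)
  | binop {X : MemEvs Addr TID} {G : Addr → Val} {R : Reg → Val} {r r₁ r₂ : Reg} {T} :
      CTStep i X G R (.seq (.binop r r₁ r₂) T)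
        (.ok X G (Function.update R r (op (R r₁) (R r₂))) T)
  | copy {X : MemEvs Addr TID} {G : Addr → Val} {R : Reg → Val} {r r' : Reg} {T} :
      CTStep i X G R (.seq (.copy r r') T) (.ok X G (Function.update R r (R r')) T)
  | read {X : MemEvs Addr TID} {G : Addr → Val} {R : Reg → Val} {r : Reg} {g : Addr} {T}
      (hw : noRacingWr i (X g).2) :
      CTStep i X G R (.seq (.read r g) T)
        (.ok (Function.update X g (Function.update (X g).1 i (Set.univ : Set TID), (X g).2))
          G (Function.update R r (G g)) T)
  | write {X : MemEvs Addr TID} {G : Addr → Val} {R : Reg → Val} {g : Addr} {r : Reg} {T}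
      (hr : noRacingRd i (X g).1) (hw : noRacingWr i (X g).2) :
      CTStep i X G R (.seq (.write g r) T)
        (.ok (Function.update X g ((X g).1, (i, (Set.univ : Set TID))))
          (Function.update G g (R r)) R T)
  | readBad {X : MemEvs Addr TID} {G : Addr → Val} {R : Reg → Val} {r : Reg} {g : Addr} {T}
      (hw : ¬ noRacingWr i (X g).2) :
      CTStep i X G R (.seq (.read r g) T) .err
  | writeBad {X : MemEvs Addr TID} {G : Addr → Val} {R : Reg → Val} {g : Addr} {r : Reg} {T}
      (hbad : ¬ noRacingRd i (X g).1 ∨ ¬ noRacingWr i (X g).2) :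
      CTStep i X G R (.seq (.write g r) T) .err

/-- A checked configuration: a tuple `(X, G, R, P)` or the error `⊥`. -/
inductive CConfig (Val C Reg Addr TID : Type) : Type where
  | ok (X : MemEvs Addr TID) (c : Config Val C Reg Addr TID)
  | err

/-- Top-level checked small-step relation `↪`. -/
inductive CStep : CConfig Val C Reg Addr TID → CConfig Val C Reg Addr TID → Prop where
  | schd {X : MemEvs Addr TID} {c : Config Val C Reg Addr TID} {i : TID}
      {X' : MemEvs Addr TID} {G' : Addr → Val} {R' : Reg → Val}
      {T' : ThreadProg C Reg Addr TID} :
      CTStep op κ i X c.G (c.R i) (c.P i) (.ok X' G' R' T') →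
      CStep (.ok X c) (.ok X' ⟨G', Function.update c.R i R', Function.update c.P i T'⟩)
  | schdBad {X : MemEvs Addr TID} {c : Config Val C Reg Addr TID} {i : TID} :
      CTStep op κ i X c.G (c.R i) (c.P i) .err →
      CStep (.ok X c) .err
  | sync {X : MemEvs Addr TID} {c : Config Val C Reg Addr TID} {I : Set TID}
      {P' : TID → ThreadProg C Reg Addr TID} :
      (∀ i ∉ I, P' i = c.P i) →
      (∀ i ∈ I, (c.P i = .ret ∧ P' i = .ret) ∨
        ∃ T, c.P i = .seq (.sync I) T ∧ P' i = T) →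
      CStep (.ok X c) (.ok (syncMem I X) ⟨c.G, c.R, P'⟩)

/-- `↪*`: reflexive-transitive closure of the checked step relation. -/
def CSteps : CConfig Val C Reg Addr TID → CConfig Val C Reg Addr TID → Prop :=
  Relation.ReflTransGen (CStep op κ)

/-- A memory access (an unchecked `Schd` step that is a read (`w = false`)
or write (`w = true`) by thread `i` to address `g`). -/
inductive AccStep (i : TID) (g : Addr) :
    Bool → Config Val C Reg Addr TID → Config Val C Reg Addr TID → Prop where
  | read {c : Config Val C Reg Addr TID} {r : Reg} {T : ThreadProg C Reg Addr TID}
      (h : c.P i = .seq (.read r g) T) :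
      AccStep i g false c
        ⟨c.G, Function.update c.R i (Function.update (c.R i) r (c.G g)),
          Function.update c.P i T⟩
  | write {c : Config Val C Reg Addr TID} {r : Reg} {T : ThreadProg C Reg Addr TID}
      (h : c.P i = .seq (.write g r) T) :
      AccStep i g true c
        ⟨Function.update c.G g (c.R i r), c.R, Function.update c.P i T⟩

/-- `P` has a data race: there are two memory accesses by distinct threads to
the same address, at least one a write, and two unchecked traces with a common
prefix after which the first access immediately precedes the second in one
trace and vice versa in the other. -/
def HasDataRace (P : TID → ThreadProg C Reg Addr TID) : Prop :=
  ∃ (G₀ : Addr → Val) (R₀ : TID → Reg → Val)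
    (c c₁ c₁' c₂ c₂' : Config Val C Reg Addr TID)
    (i j : TID) (g : Addr) (wi wj : Bool),
    i ≠ j ∧ (wi = true ∨ wj = true) ∧
    Steps op κ ⟨G₀, R₀, P⟩ c ∧
    AccStep i g wi c c₁ ∧ AccStep j g wj c₁ c₁' ∧
    AccStep j g wj c c₂ ∧ AccStep i g wi c₂ c₂'

/-- `(G, R, P) ↓ (G', R')`: the unchecked dynamics reaches a configuration
with every thread at `return`, with final shared memory `G'` and registers `R'`. -/
def Terminates (c : Config Val C Reg Addr TID)
    (G' : Addr → Val) (R' : TID → Reg → Val) : Prop :=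
  ∃ P', Steps op κ c ⟨G', R', P'⟩ ∧ ∀ i, P' i = ThreadProg.ret

/-- `(X, G, R, P) ↪↓ (G', R')`: the checked dynamics reaches a configuration
with every thread at `return`, with final shared memory `G'` and registers `R'`. -/
def CTerminates (X : MemEvs Addr TID) (c : Config Val C Reg Addr TID)
    (G' : Addr → Val) (R' : TID → Reg → Val) : Prop :=
  ∃ X' P', CSteps op κ (.ok X c) (.ok X' ⟨G', R', P'⟩) ∧ ∀ i, P' i = ThreadProg.ret

end Dynamics

set_option linter.unusedSectionVars false

section Helpers
variable {Val C Reg Addr TID : Type} [DecidableEq Reg] [DecidableEq Addr] [DecidableEq TID]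
variable {op : Val → Val → Val} {κ : C → Val}

lemma ctstep_det {i : TID} {X : MemEvs Addr TID} {G : Addr → Val} {R : Reg → Val}
    {T : ThreadProg C Reg Addr TID} {o o' : CTRes Val C Reg Addr TID}
    (h : CTStep op κ i X G R T o) (h' : CTStep op κ i X G R T o') : o = o' := by
  cases h <;> cases h' <;> first | rfl | tauto

lemma ctstep_not_sync {i : TID} {X : MemEvs Addr TID} {G : Addr → Val} {R : Reg → Val}
    {T : ThreadProg C Reg Addr TID} {o : CTRes Val C Reg Addr TID}
    (h : CTStep op κ i X G R T o) :
    T ≠ .ret ∧ ∀ (I : Set TID) (T' : ThreadProg C Reg Addr TID), T ≠ .seq (.sync I) T' := by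
  cases h <;> simp

lemma not_noRacingWr_iff {i : TID} {w : TID × Set TID} :
    ¬ noRacingWr i w ↔ i ≠ w.1 ∧ i ∈ w.2 := by
  simp [noRacingWr]

lemma not_noRacingRd_iff {i : TID} {rd : TID → Set TID} :
    ¬ noRacingRd i rd ↔ ∃ j, i ≠ j ∧ i ∈ rd j := by
  simp [noRacingRd]

/-- A faulty access by `i` stays faulty after an ok step by a different thread `j`. -/
lemma err_persist_schd {i j : TID} (hij : i ≠ j) {X : MemEvs Addr TID}
    {G Gc : Addr → Val} {Ri Rj : Reg → Val} {Ti Tj : ThreadProg C Reg Addr TID}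
    {X₂ : MemEvs Addr TID} {G₂ : Addr → Val} {R₂ : Reg → Val} {T₂ : ThreadProg C Reg Addr TID}
    (hbad : CTStep op κ i X G Ri Ti .err)
    (hok : CTStep op κ j X Gc Rj Tj (.ok X₂ G₂ R₂ T₂)) (G' : Addr → Val) :
    CTStep op κ i X₂ G' Ri Ti .err := by
  have keyW : ∀ g : Addr, ¬ noRacingWr i (X g).2 → ¬ noRacingWr i (X₂ g).2 := by
    intro g hw
    cases hok with
    | const => exact hw
    | binop => exact hw
    | copy => exact hw
    | read hw' =>
        rename_i r g'
        by_cases hg : g = g'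
        · subst hg; simpa [Function.update] using hw
        · simpa [Function.update, hg] using hw
    | write hr' hw' =>
        rename_i g' r
        by_cases hg : g = g' <;>
          simp [Function.update, hg, hw, not_noRacingWr_iff, hij]
  have keyR : ∀ g : Addr, ¬ noRacingRd i (X g).1 → ¬ noRacingRd i (X₂ g).1 := by
    intro g hr
    rw [not_noRacingRd_iff] at hr
    obtain ⟨k, hik, hmem⟩ := hr
    rw [not_noRacingRd_iff]
    cases hok with
    | const => exact ⟨k, hik, hmem⟩
    | binop => exact ⟨k, hik, hmem⟩
    | copy => exact ⟨k, hik, hmem⟩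
    | read hw' =>
        rename_i r g'
        by_cases hg : g = g'
        · subst hg
          by_cases hk : k = j
          · exact ⟨j, hk ▸ hik, by simp [Function.update]⟩
          · exact ⟨k, hik, by simp [Function.update, hk, hmem]⟩
        · exact ⟨k, hik, by simp [Function.update, hg, hmem]⟩
    | write hr' hw' =>
        rename_i g' r
        by_cases hg : g = g'
        · subst hg; exact ⟨k, hik, by simpa [Function.update] using hmem⟩
        · exact ⟨k, hik, by simpa [Function.update, hg] using hmem⟩
  cases hbad with
  | readBad hb => exact CTStep.readBad (keyW _ hb)
  | writeBad hb => exact CTStep.writeBad (hb.imp (keyR _) (keyW _))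

/-- A faulty access by `i ∉ I` stays faulty after `sync I`. -/
lemma err_persist_sync {i : TID} {I : Set TID} (hiI : i ∉ I) {X : MemEvs Addr TID}
    {G G' : Addr → Val} {Ri : Reg → Val} {Ti : ThreadProg C Reg Addr TID}
    (hbad : CTStep op κ i X G Ri Ti .err) :
    CTStep op κ i (syncMem I X) G' Ri Ti .err := by
  have keyW : ∀ g : Addr, ¬ noRacingWr i (X g).2 → ¬ noRacingWr i ((syncMem I X) g).2 := by
    intro g hw
    rw [not_noRacingWr_iff] at hw ⊢
    simp only [syncMem]
    split <;> simp [hw.1, hw.2, hiI]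
  have keyR : ∀ g : Addr, ¬ noRacingRd i (X g).1 → ¬ noRacingRd i ((syncMem I X) g).1 := by
    intro g hr
    rw [not_noRacingRd_iff] at hr ⊢
    obtain ⟨k, hik, hmem⟩ := hr
    refine ⟨k, hik, ?_⟩
    simp only [syncMem]
    split <;> simp [hmem, hiI]
  cases hbad with
  | readBad hb => exact CTStep.readBad (keyW _ hb)
  | writeBad hb => exact CTStep.writeBad (hb.imp (keyR _) (keyW _))

end Helpers

section Helpers2
variable {Val C Reg Addr TID : Type} [DecidableEq Reg] [DecidableEq Addr] [DecidableEq TID]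
variable {op : Val → Val → Val} {κ : C → Val}

lemma syncMem_comm (I J : Set TID) (X : MemEvs Addr TID) :
    syncMem I (syncMem J X) = syncMem J (syncMem I X) := by
  funext g
  simp only [syncMem]
  refine Prod.ext ?_ ?_
  · funext k
    by_cases hI : k ∈ I <;> by_cases hJ : k ∈ J <;>
      simp [hI, hJ, Set.diff_diff_comm]
  · by_cases hI : (X g).2.1 ∈ I <;> by_cases hJ : (X g).2.1 ∈ J <;>
      simp [hI, hJ, Set.diff_diff_comm]

lemma noRacingWr_sync {i : TID} {I : Set TID} {X : MemEvs Addr TID} {g : Addr}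
    (h : noRacingWr i (X g).2) : noRacingWr i ((syncMem I X) g).2 := by
  simp only [syncMem]
  split
  · rcases h with h | h
    · exact Or.inl h
    · exact Or.inr (fun hm => h hm.1)
  · exact h

lemma noRacingRd_sync {i : TID} {I : Set TID} {X : MemEvs Addr TID} {g : Addr}
    (h : noRacingRd i (X g).1) : noRacingRd i ((syncMem I X) g).1 := by
  intro k
  rcases h k with h | h
  · exact Or.inl h
  · refine Or.inr ?_
    simp only [syncMem]
    split <;> simp [h]

/-- An ok thread step by `i ∉ I` commutes with `sync I` on the memory-event context. -/
lemma ctstep_sync {i : TID} {I : Set TID} (hiI : i ∉ I) {X Xi : MemEvs Addr TID}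
    {G Gi : Addr → Val} {Ri Ri' : Reg → Val} {Ti Ti' : ThreadProg C Reg Addr TID}
    (h : CTStep op κ i X G Ri Ti (.ok Xi Gi Ri' Ti')) :
    CTStep op κ i (syncMem I X) G Ri Ti (.ok (syncMem I Xi) Gi Ri' Ti') := by
  cases h with
  | const => exact CTStep.const
  | binop => exact CTStep.binop
  | copy => exact CTStep.copy
  | read hw =>
      rename_i r g
      have hX : Function.update (syncMem I X) g
          (Function.update ((syncMem I X) g).1 i (Set.univ : Set TID), ((syncMem I X) g).2)
          = syncMem I (Function.update X g
              (Function.update (X g).1 i (Set.univ : Set TID), (X g).2)) := by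
        funext g'
        by_cases hg : g' = g
        · subst hg
          rw [Function.update_self]
          simp only [syncMem]
          rw [Function.update_self]
          refine Prod.ext ?_ rfl
          funext k
          by_cases hk : k = i
          · subst hk; simp [hiI, Function.update_self]
          · by_cases hkI : k ∈ I <;>
              simp [hkI, Function.update_of_ne hk]
        · rw [Function.update_of_ne hg]
          simp only [syncMem]
          rw [Function.update_of_ne hg]
      exact hX ▸ CTStep.read (noRacingWr_sync hw)
  | write hr hw =>
      rename_i g r
      have hX : Function.update (syncMem I X) g
          (((syncMem I X) g).1, (i, (Set.univ : Set TID)))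
          = syncMem I (Function.update X g ((X g).1, (i, (Set.univ : Set TID)))) := by
        funext g'
        by_cases hg : g' = g
        · subst hg
          rw [Function.update_self]
          simp only [syncMem]
          rw [Function.update_self]
          exact Prod.ext rfl (by simp [hiI])
        · rw [Function.update_of_ne hg]
          simp only [syncMem]
          rw [Function.update_of_ne hg]
      exact hX ▸ CTStep.write (noRacingRd_sync hr) (noRacingWr_sync hw)

end Helpers2

section Helpers3
variable {Val C Reg Addr TID : Type} [DecidableEq Reg] [DecidableEq Addr] [DecidableEq TID]
variable {op : Val → Val → Val} {κ : C → Val}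

/-- Glue: if the two thread steps can be replayed after each other with the same
final memory state, the two schedulings join in one step. -/
lemma glue {i j : TID} (hij : i ≠ j) {c : Config Val C Reg Addr TID}
    {Xi Xj X' : MemEvs Addr TID} {Gi Gj G' : Addr → Val}
    {Ri' Rj' : Reg → Val} {Ti Tj : ThreadProg C Reg Addr TID}
    (hj' : CTStep op κ j Xi Gi (c.R j) (c.P j) (.ok X' G' Rj' Tj))
    (hi' : CTStep op κ i Xj Gj (c.R i) (c.P i) (.ok X' G' Ri' Ti)) :
    ∃ e, Relation.ReflGen (CStep op κ)
        (.ok Xi ⟨Gi, Function.update c.R i Ri', Function.update c.P i Ti⟩) e ∧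
      Relation.ReflGen (CStep op κ)
        (.ok Xj ⟨Gj, Function.update c.R j Rj', Function.update c.P j Tj⟩) e := by
  refine ⟨.ok X' ⟨G', Function.update (Function.update c.R i Ri') j Rj',
      Function.update (Function.update c.P i Ti) j Tj⟩,
    Relation.ReflGen.single ?_, Relation.ReflGen.single ?_⟩
  · exact CStep.schd (c := ⟨Gi, Function.update c.R i Ri', Function.update c.P i Ti⟩)
      (i := j) (by simpa [Function.update_of_ne (Ne.symm hij)] using hj')
  · have h := CStep.schd (op := op) (κ := κ)
      (c := ⟨Gj, Function.update c.R j Rj', Function.update c.P j Tj⟩)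
      (i := i) (by simpa [Function.update_of_ne hij] using hi')
    rw [show (Function.update (Function.update c.R i Ri') j Rj')
        = (Function.update (Function.update c.R j Rj') i Ri') from Function.update_comm hij .. ,
      show (Function.update (Function.update c.P i Ti) j Tj)
        = (Function.update (Function.update c.P j Tj) i Ti) from Function.update_comm hij ..]
    exact h
end Helpers3

section Helpers3b
variable {Val C Reg Addr TID : Type} [DecidableEq Reg] [DecidableEq Addr] [DecidableEq TID]
variable {op : Val → Val → Val} {κ : C → Val}

lemma glue' {i j : TID} (hij : i ≠ j) {c : Config Val C Reg Addr TID}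
    {Xi Xj X' X'' : MemEvs Addr TID} {Gi Gj G' G'' : Addr → Val}
    {Ri' Ri'' Rj' Rj'' : Reg → Val} {Ti Tj : ThreadProg C Reg Addr TID}
    (hj' : CTStep op κ j Xi Gi (c.R j) (c.P j) (.ok X' G' Rj'' Tj))
    (hi' : CTStep op κ i Xj Gj (c.R i) (c.P i) (.ok X'' G'' Ri'' Ti))
    (hX : X'' = X') (hG : G'' = G') (hRi : Ri'' = Ri') (hRj : Rj'' = Rj') :
    ∃ e, Relation.ReflGen (CStep op κ)
        (.ok Xi ⟨Gi, Function.update c.R i Ri', Function.update c.P i Ti⟩) e ∧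
      Relation.ReflGen (CStep op κ)
        (.ok Xj ⟨Gj, Function.update c.R j Rj', Function.update c.P j Tj⟩) e := by
  subst hX hG hRi hRj
  exact glue hij hj' hi'
end Helpers3b

section Main
variable {Val C Reg Addr TID : Type} [DecidableEq Reg] [DecidableEq Addr] [DecidableEq TID]
variable {op : Val → Val → Val} {κ : C → Val}

lemma notMem_sync_of_ctstep {i : TID} {I : Set TID} {X : MemEvs Addr TID}
    {c : Config Val C Reg Addr TID} {o : CTRes Val C Reg Addr TID}
    (hi : CTStep op κ i X c.G (c.R i) (c.P i) o)
    (hP2 : ∀ k ∈ I, (c.P k = .ret ∧ True) ∨ ∃ T, c.P k = .seq (.sync I) T ∧ True) :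
    i ∉ I := by
  intro hiI
  rcases hP2 i hiI with ⟨h1, _⟩ | ⟨T, h1, _⟩
  · exact (ctstep_not_sync hi).1 h1
  · exact (ctstep_not_sync hi).2 I T h1

lemma schd_schd_ne {i j : TID} (hij : i ≠ j) {X : MemEvs Addr TID}
    {c : Config Val C Reg Addr TID}
    {Xi Xj : MemEvs Addr TID} {Gi Gj : Addr → Val} {Ri' Rj' : Reg → Val}
    {Ti Tj : ThreadProg C Reg Addr TID}
    (hi : CTStep op κ i X c.G (c.R i) (c.P i) (.ok Xi Gi Ri' Ti))
    (hj : CTStep op κ j X c.G (c.R j) (c.P j) (.ok Xj Gj Rj' Tj)) :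
    ∃ e, Relation.ReflGen (CStep op κ)
        (.ok Xi ⟨Gi, Function.update c.R i Ri', Function.update c.P i Ti⟩) e ∧
      Relation.ReflGen (CStep op κ)
        (.ok Xj ⟨Gj, Function.update c.R j Rj', Function.update c.P j Tj⟩) e := by
  classical
  generalize hPi : c.P i = Pi at hi
  generalize hPj : c.P j = Pj at hj
  cases hi with
  | const =>
    cases hj with
    | const => exact glue hij (by rw [hPj]; exact CTStep.const) (by rw [hPi]; exact CTStep.const)
    | binop => exact glue hij (by rw [hPj]; exact CTStep.binop) (by rw [hPi]; exact CTStep.const)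
    | copy => exact glue hij (by rw [hPj]; exact CTStep.copy) (by rw [hPi]; exact CTStep.const)
    | read hwj => exact glue hij (by rw [hPj]; exact CTStep.read hwj) (by rw [hPi]; exact CTStep.const)
    | write hrj hwj => exact glue hij (by rw [hPj]; exact CTStep.write hrj hwj) (by rw [hPi]; exact CTStep.const)
  | binop =>
    cases hj with
    | const => exact glue hij (by rw [hPj]; exact CTStep.const) (by rw [hPi]; exact CTStep.binop)
    | binop => exact glue hij (by rw [hPj]; exact CTStep.binop) (by rw [hPi]; exact CTStep.binop)
    | copy => exact glue hij (by rw [hPj]; exact CTStep.copy) (by rw [hPi]; exact CTStep.binop)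
    | read hwj => exact glue hij (by rw [hPj]; exact CTStep.read hwj) (by rw [hPi]; exact CTStep.binop)
    | write hrj hwj => exact glue hij (by rw [hPj]; exact CTStep.write hrj hwj) (by rw [hPi]; exact CTStep.binop)
  | copy =>
    cases hj with
    | const => exact glue hij (by rw [hPj]; exact CTStep.const) (by rw [hPi]; exact CTStep.copy)
    | binop => exact glue hij (by rw [hPj]; exact CTStep.binop) (by rw [hPi]; exact CTStep.copy)
    | copy => exact glue hij (by rw [hPj]; exact CTStep.copy) (by rw [hPi]; exact CTStep.copy)
    | read hwj => exact glue hij (by rw [hPj]; exact CTStep.read hwj) (by rw [hPi]; exact CTStep.copy)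
    | write hrj hwj => exact glue hij (by rw [hPj]; exact CTStep.write hrj hwj) (by rw [hPi]; exact CTStep.copy)
  | read hwi =>
    rename_i ri gi
    cases hj with
    | const => exact glue hij (by rw [hPj]; exact CTStep.const) (by rw [hPi]; exact CTStep.read hwi)
    | binop => exact glue hij (by rw [hPj]; exact CTStep.binop) (by rw [hPi]; exact CTStep.read hwi)
    | copy => exact glue hij (by rw [hPj]; exact CTStep.copy) (by rw [hPi]; exact CTStep.read hwi)
    | read hwj =>
      rename_i rj gj
      by_cases hg : gj = gi
      · subst hg
        refine glue' hij (Rj'' := Function.update (c.R j) rj (c.G gj))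
          (by rw [hPj]
              exact CTStep.read (by simpa [Function.update_self] using hwj))
          (by rw [hPi]
              exact CTStep.read (by simpa [Function.update_self] using hwi))
          ?_ rfl rfl rfl
        · simp only [Function.update_self, Function.update_idem]
          rw [Function.update_comm hij]
      · refine glue' hij (Rj'' := Function.update (c.R j) rj (c.G gj))
          (by rw [hPj]
              exact CTStep.read (by simpa [Function.update_of_ne hg] using hwj))
          (by rw [hPi]
              exact CTStep.read (by simpa [Function.update_of_ne (fun h => hg h.symm)] using hwi))
          ?_ rfl rfl rfl
        · rw [Function.update_comm hg, Function.update_of_ne hg,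
            Function.update_of_ne (fun h => hg h.symm)]
    | write hrj hwj =>
      rename_i gj rj
      by_cases hg : gj = gi
      · -- conflict: both orders fault
        subst hg
        refine ⟨.err, .single (CStep.schdBad (i := j) ?_), .single (CStep.schdBad (i := i) ?_)⟩
        · have hb : CTStep op κ j (Function.update X gj
              (Function.update (X gj).1 i Set.univ, (X gj).2)) c.G (c.R j) (c.P j) .err := by
            rw [hPj]
            refine CTStep.writeBad (Or.inl ?_)
            rw [not_noRacingRd_iff]
            exact ⟨i, Ne.symm hij, by simp [Function.update_self]⟩
          simpa [Function.update_of_ne (Ne.symm hij)] using hb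
        · have hb : CTStep op κ i (Function.update X gj ((X gj).1, (j, Set.univ)))
              (Function.update c.G gj (c.R j rj)) (c.R i) (c.P i) .err := by
            rw [hPi]
            refine CTStep.readBad ?_
            rw [not_noRacingWr_iff]
            simp [Function.update_self, hij, Ne.symm hij]
          simpa [Function.update_of_ne hij] using hb
      · refine glue' hij (Rj'' := c.R j)
          (by rw [hPj]
              exact CTStep.write (by simpa [Function.update_of_ne hg] using hrj)
                (by simpa [Function.update_of_ne hg] using hwj))
          (by rw [hPi]
              exact CTStep.read (by simpa [Function.update_of_ne (fun h => hg h.symm)] using hwi))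
          ?_ rfl ?_ rfl
        · rw [Function.update_comm hg, Function.update_of_ne hg,
            Function.update_of_ne (fun h => hg h.symm)]
        · rw [Function.update_of_ne (fun h => hg h.symm)]
  | write hri hwi =>
    rename_i gi ri
    cases hj with
    | const => exact glue hij (by rw [hPj]; exact CTStep.const) (by rw [hPi]; exact CTStep.write hri hwi)
    | binop => exact glue hij (by rw [hPj]; exact CTStep.binop) (by rw [hPi]; exact CTStep.write hri hwi)
    | copy => exact glue hij (by rw [hPj]; exact CTStep.copy) (by rw [hPi]; exact CTStep.write hri hwi)
    | read hwj =>
      rename_i rj gj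
      by_cases hg : gj = gi
      · -- conflict
        subst hg
        refine ⟨.err, .single (CStep.schdBad (i := j) ?_), .single (CStep.schdBad (i := i) ?_)⟩
        · have hb : CTStep op κ j (Function.update X gj ((X gj).1, (i, Set.univ)))
              (Function.update c.G gj (c.R i ri)) (c.R j) (c.P j) .err := by
            rw [hPj]
            refine CTStep.readBad ?_
            rw [not_noRacingWr_iff]
            simp [Function.update_self, hij, Ne.symm hij]
          simpa [Function.update_of_ne (Ne.symm hij)] using hb
        · have hb : CTStep op κ i (Function.update X gj
              (Function.update (X gj).1 j Set.univ, (X gj).2)) c.G (c.R i) (c.P i) .err := by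
            rw [hPi]
            refine CTStep.writeBad (Or.inl ?_)
            rw [not_noRacingRd_iff]
            exact ⟨j, hij, by simp [Function.update_self]⟩
          simpa [Function.update_of_ne hij] using hb
      · refine glue' hij (Rj'' := Function.update (c.R j) rj (Function.update c.G gi (c.R i ri) gj))
          (by rw [hPj]
              exact CTStep.read (by simpa [Function.update_of_ne hg] using hwj))
          (by rw [hPi]
              exact CTStep.write (by simpa [Function.update_of_ne (fun h => hg h.symm)] using hri)
                (by simpa [Function.update_of_ne (fun h => hg h.symm)] using hwi))
          ?_ rfl rfl ?_
        · rw [Function.update_comm (fun h => hg h.symm), Function.update_of_ne hg,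
            Function.update_of_ne (fun h => hg h.symm)]
        · rw [Function.update_of_ne hg]
    | write hrj hwj =>
      rename_i gj rj
      by_cases hg : gj = gi
      · -- conflict: write/write
        subst hg
        refine ⟨.err, .single (CStep.schdBad (i := j) ?_), .single (CStep.schdBad (i := i) ?_)⟩
        · have hb : CTStep op κ j (Function.update X gj ((X gj).1, (i, Set.univ)))
              (Function.update c.G gj (c.R i ri)) (c.R j) (c.P j) .err := by
            rw [hPj]
            refine CTStep.writeBad (Or.inr ?_)
            rw [not_noRacingWr_iff]
            simp [Function.update_self, hij, Ne.symm hij]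
          simpa [Function.update_of_ne (Ne.symm hij)] using hb
        · have hb : CTStep op κ i (Function.update X gj ((X gj).1, (j, Set.univ)))
              (Function.update c.G gj (c.R j rj)) (c.R i) (c.P i) .err := by
            rw [hPi]
            refine CTStep.writeBad (Or.inr ?_)
            rw [not_noRacingWr_iff]
            simp [Function.update_self, hij, Ne.symm hij]
          simpa [Function.update_of_ne hij] using hb
      · refine glue' hij (Rj'' := c.R j)
          (by rw [hPj]
              exact CTStep.write (by simpa [Function.update_of_ne hg] using hrj)
                (by simpa [Function.update_of_ne hg] using hwj))
          (by rw [hPi]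
              exact CTStep.write (by simpa [Function.update_of_ne (fun h => hg h.symm)] using hri)
                (by simpa [Function.update_of_ne (fun h => hg h.symm)] using hwi))
          ?_ ?_ rfl rfl
        · rw [Function.update_comm hg, Function.update_of_ne hg,
            Function.update_of_ne (fun h => hg h.symm)]
        · rw [Function.update_comm hg]

lemma cstep_diamond {a b d : CConfig Val C Reg Addr TID}
    (h1 : CStep op κ a b) (h2 : CStep op κ a d) :
    ∃ e, Relation.ReflGen (CStep op κ) b e ∧ Relation.ReflGen (CStep op κ) d e := by
  classical
  cases h1 with
  | @schd X c i Xi Gi Ri' Ti hi =>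
    cases h2 with
    | @schd _ _ j Xj Gj Rj' Tj hj =>
      by_cases hij : i = j
      · subst hij
        obtain ⟨rfl, rfl, rfl, rfl⟩ :
            Xi = Xj ∧ Gi = Gj ∧ Ri' = Rj' ∧ Ti = Tj := by
          have := ctstep_det hi hj
          injection this with e1 e2 e3 e4
          exact ⟨e1, e2, e3, e4⟩
        exact ⟨_, .refl, .refl⟩
      · exact schd_schd_ne hij hi hj
    | @schdBad _ _ j hj =>
      by_cases hij : i = j
      · subst hij; exact absurd (ctstep_det hi hj) (by simp)
      · refine ⟨.err, .single (CStep.schdBad (i := j) ?_), .refl⟩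
        have := err_persist_schd (Ne.symm hij) hj hi Gi
        simpa [Function.update_of_ne (Ne.symm hij)] using this
    | @sync _ _ I P' hP1 hP2 =>
      have hiI : i ∉ I := notMem_sync_of_ctstep hi
        (fun k hk => (hP2 k hk).imp (fun h => ⟨h.1, trivial⟩)
          (fun ⟨T, h, _⟩ => ⟨T, h, trivial⟩))
      refine ⟨.ok (syncMem I Xi) ⟨Gi, Function.update c.R i Ri', Function.update P' i Ti⟩,
        .single ?_, .single ?_⟩
      · refine CStep.sync (I := I) (P' := Function.update P' i Ti) ?_ ?_
        · intro k hk
          by_cases hki : k = i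
          · subst hki; simp
          · simp [Function.update_of_ne hki, hP1 k hk]
        · intro k hk
          have hki : k ≠ i := fun h => hiI (h ▸ hk)
          simpa [Function.update_of_ne hki] using hP2 k hk
      · have hstep : CTStep op κ i (syncMem I X) c.G (c.R i) (P' i)
            (.ok (syncMem I Xi) Gi Ri' Ti) := by
          rw [hP1 i hiI]; exact ctstep_sync hiI hi
        exact CStep.schd (c := ⟨c.G, c.R, P'⟩) hstep
  | @schdBad X c i hi =>
    cases h2 with
    | @schd _ _ j Xj Gj Rj' Tj hj =>
      by_cases hij : i = j
      · subst hij; exact absurd (ctstep_det hi hj) (by simp)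
      · refine ⟨.err, .refl, .single (CStep.schdBad (i := i) ?_)⟩
        have := err_persist_schd hij hi hj Gj
        simpa [Function.update_of_ne hij] using this
    | schdBad hj => exact ⟨.err, .refl, .refl⟩
    | @sync _ _ I P' hP1 hP2 =>
      have hiI : i ∉ I := notMem_sync_of_ctstep hi
        (fun k hk => (hP2 k hk).imp (fun h => ⟨h.1, trivial⟩)
          (fun ⟨T, h, _⟩ => ⟨T, h, trivial⟩))
      have herr : CTStep op κ i (syncMem I X) c.G (c.R i) (P' i) .err := by
        rw [hP1 i hiI]; exact err_persist_sync hiI hi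
      exact ⟨.err, .refl, .single (CStep.schdBad (c := ⟨c.G, c.R, P'⟩) herr)⟩
  | @sync X c I P' hP1 hP2 =>
    cases h2 with
    | @schd _ _ j Xj Gj Rj' Tj hj =>
      have hjI : j ∉ I := notMem_sync_of_ctstep hj
        (fun k hk => (hP2 k hk).imp (fun h => ⟨h.1, trivial⟩)
          (fun ⟨T, h, _⟩ => ⟨T, h, trivial⟩))
      refine ⟨.ok (syncMem I Xj) ⟨Gj, Function.update c.R j Rj', Function.update P' j Tj⟩,
        .single ?_, .single ?_⟩
      · have hstep : CTStep op κ j (syncMem I X) c.G (c.R j) (P' j)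
            (.ok (syncMem I Xj) Gj Rj' Tj) := by
          rw [hP1 j hjI]; exact ctstep_sync hjI hj
        exact CStep.schd (c := ⟨c.G, c.R, P'⟩) hstep
      · refine CStep.sync (I := I) (P' := Function.update P' j Tj) ?_ ?_
        · intro k hk
          by_cases hkj : k = j
          · subst hkj; simp
          · simp [Function.update_of_ne hkj, hP1 k hk]
        · intro k hk
          have hkj : k ≠ j := fun h => hjI (h ▸ hk)
          simpa [Function.update_of_ne hkj] using hP2 k hk
    | @schdBad _ _ j hj =>
      have hjI : j ∉ I := notMem_sync_of_ctstep hj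
        (fun k hk => (hP2 k hk).imp (fun h => ⟨h.1, trivial⟩)
          (fun ⟨T, h, _⟩ => ⟨T, h, trivial⟩))
      have herr : CTStep op κ j (syncMem I X) c.G (c.R j) (P' j) .err := by
        rw [hP1 j hjI]; exact err_persist_sync hjI hj
      exact ⟨.err, .single (CStep.schdBad (c := ⟨c.G, c.R, P'⟩) herr), .refl⟩
    | @sync _ _ J Q' hQ1 hQ2 =>
      by_cases hIJ : I = J
      · subst hIJ
        have hPQ : P' = Q' := by
          funext k
          by_cases hk : k ∈ I
          · rcases hP2 k hk with ⟨h1, h2⟩ | ⟨T, h1, h2⟩ <;>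
              rcases hQ2 k hk with ⟨h1', h2'⟩ | ⟨T', h1', h2'⟩
            · rw [h2, h2']
            · rw [h1] at h1'; cases h1'
            · rw [h1] at h1'; cases h1'
            · rw [h1] at h1'
              injection h1' with _ hT
              rw [h2, h2', hT]
          · rw [hP1 k hk, hQ1 k hk]
        subst hPQ
        exact ⟨_, .refl, .refl⟩
      · -- distinct barriers commute
        have hret : ∀ k, k ∈ I → k ∈ J → c.P k = .ret := by
          intro k hkI hkJ
          rcases hP2 k hkI with ⟨h1, _⟩ | ⟨T, h1, _⟩
          · exact h1
          · rcases hQ2 k hkJ with ⟨h1', _⟩ | ⟨T', h1', _⟩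
            · exact h1'
            · rw [h1] at h1'
              injection h1' with hs _
              injection hs with hIJ'
              exact absurd hIJ' hIJ
        refine ⟨.ok (syncMem J (syncMem I X))
          ⟨c.G, c.R, fun k => if k ∈ I then P' k else Q' k⟩, .single ?_, .single ?_⟩
        · refine CStep.sync (c := ⟨c.G, c.R, P'⟩) (I := J)
            (P' := fun k => if k ∈ I then P' k else Q' k) ?_ ?_
          · intro k hk
            by_cases hkI : k ∈ I
            · simp [hkI]
            · simp [hkI, hQ1 k hk, hP1 k hkI]
          · intro k hk
            by_cases hkI : k ∈ I
            · have h1 := hret k hkI hk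
              have h2 : P' k = .ret := by
                rcases hP2 k hkI with ⟨_, h2⟩ | ⟨T, h1', _⟩
                · exact h2
                · rw [h1] at h1'; cases h1'
              exact Or.inl ⟨h2, by simp [hkI, h2]⟩
            · have := hQ2 k hk
              simpa [hkI, hP1 k hkI] using this
        · have := CStep.sync (op := op) (κ := κ) (X := syncMem J X) (c := ⟨c.G, c.R, Q'⟩) (I := I)
            (P' := fun k => if k ∈ I then P' k else Q' k) ?_ ?_
          · rw [syncMem_comm] at this
            exact this
          · intro k hk
            simp [hk]
          · intro k hk
            by_cases hkJ : k ∈ J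
            · have h1 := hret k hk hkJ
              have h2 : Q' k = .ret := by
                rcases hQ2 k hkJ with ⟨_, h2⟩ | ⟨T, h1', _⟩
                · exact h2
                · rw [h1] at h1'; cases h1'
              have h3 : P' k = .ret := by
                rcases hP2 k hk with ⟨_, h3⟩ | ⟨T, h1', _⟩
                · exact h3
                · rw [h1] at h1'; cases h1'
              exact Or.inl ⟨h2, by simp [hk, h3]⟩
            · have := hP2 k hk
              have hQk : Q' k = c.P k := hQ1 k hkJ
              simpa [hQk, hk] using this

end Main

/-- **One-step diamond property** for the reflexive closure `↪⁼` of the checked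
small-step relation `↪`: if `C ↪⁼ C₁` and `C ↪⁼ C₂` then there exists a
configuration `C'` with `C₁ ↪⁼ C'` and `C₂ ↪⁼ C'`. -/
theorem diamond_refl_closure
    {Val C Reg Addr TID : Type} [DecidableEq Reg] [DecidableEq Addr] [DecidableEq TID]
    (op : Val → Val → Val) (κ : C → Val)
    (c c₁ c₂ : CConfig Val C Reg Addr TID)
    (h₁ : Relation.ReflGen (CStep op κ) c c₁)
    (h₂ : Relation.ReflGen (CStep op κ) c c₂) :
    ∃ c' : CConfig Val C Reg Addr TID,
      Relation.ReflGen (CStep op κ) c₁ c' ∧ Relation.ReflGen (CStep op κ) c₂ c' := by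
  cases h₁ with
  | refl => exact ⟨c₂, h₂, .refl⟩
  | single s₁ =>
    cases h₂ with
    | refl => exact ⟨c₁, .refl, .single s₁⟩
    | single s₂ => exact cstep_diamond s₁ s₂

end Volta
end

section
/- For every unchecked trace there is a corresponding checked trace or a detected race: if (G, R, P) →* (G', R', P') in the language L, then for every memory-event context X either there exists X' such that (X, G, R, P) ↪* (X', G', R', P'), or (X, G, R, P) ↪* ⊥. -/
namespace Volta

theorem ctstep_of_tstep
    {Val C Reg Addr TID : Type} [DecidableEq Reg] [DecidableEq Addr] [DecidableEq TID]
    (op : Val → Val → Val) (κ : C → Val)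
    {G G' : Addr → Val} {R R' : Reg → Val} {T T' : ThreadProg C Reg Addr TID}
    (h : TStep op κ G R T G' R' T') (i : TID) (X : MemEvs Addr TID) :
    (∃ X', CTStep op κ i X G R T (.ok X' G' R' T')) ∨ CTStep op κ i X G R T .err := by
  cases h with
  | const => exact Or.inl ⟨X, CTStep.const⟩
  | binop => exact Or.inl ⟨X, CTStep.binop⟩
  | copy => exact Or.inl ⟨X, CTStep.copy⟩
  | @read r g _ =>
    by_cases hw : noRacingWr i (X g).2
    · exact Or.inl ⟨_, CTStep.read hw⟩
    · exact Or.inr (CTStep.readBad hw)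
  | @write g r _ =>
    by_cases hw : noRacingWr i (X g).2
    · by_cases hr : noRacingRd i (X g).1
      · exact Or.inl ⟨_, CTStep.write hr hw⟩
      · exact Or.inr (CTStep.writeBad (Or.inl hr))
    · exact Or.inr (CTStep.writeBad (Or.inr hw))

theorem cstep_of_step
    {Val C Reg Addr TID : Type} [DecidableEq Reg] [DecidableEq Addr] [DecidableEq TID]
    (op : Val → Val → Val) (κ : C → Val)
    {c c' : Config Val C Reg Addr TID} (h : Step op κ c c') (X : MemEvs Addr TID) :
    (∃ X', CStep op κ (.ok X c) (.ok X' c')) ∨ CStep op κ (.ok X c) .err := by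
  cases h with
  | @schd i G2 R2 T2 ht =>
    rcases ctstep_of_tstep op κ ht i X with ⟨X', h'⟩ | h'
    · exact Or.inl ⟨X', .schd h'⟩
    · exact Or.inr (.schdBad h')
  | sync h1 h2 => exact Or.inl ⟨_, .sync h1 h2⟩

theorem csteps_of_steps
    {Val C Reg Addr TID : Type} [DecidableEq Reg] [DecidableEq Addr] [DecidableEq TID]
    (op : Val → Val → Val) (κ : C → Val)
    {c c' : Config Val C Reg Addr TID} (h : Steps op κ c c') (X : MemEvs Addr TID) :
    (∃ X', CSteps op κ (.ok X c) (.ok X' c')) ∨ CSteps op κ (.ok X c) .err := by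
  induction h using Relation.ReflTransGen.head_induction_on generalizing X with
  | refl => exact Or.inl ⟨X, Relation.ReflTransGen.refl⟩
  | head hstep _ ih =>
    rcases cstep_of_step op κ hstep X with ⟨X₁, h1⟩ | hbad
    · rcases ih X₁ with ⟨X', h2⟩ | h2
      · exact Or.inl ⟨X', Relation.ReflTransGen.head h1 h2⟩
      · exact Or.inr (Relation.ReflTransGen.head h1 h2)
    · exact Or.inr (Relation.ReflTransGen.single hbad)

/-- For every unchecked trace there is a corresponding checked trace or a
detected race: if `(G, R, P) →* (G', R', P')`, then for every memory-event
context `X` either there exists `X'` such that `(X, G, R, P) ↪* (X', G', R', P')`,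
or `(X, G, R, P) ↪* ⊥`. -/
theorem checked_of_unchecked
    {Val C Reg Addr TID : Type} [DecidableEq Reg] [DecidableEq Addr] [DecidableEq TID]
    (op : Val → Val → Val) (κ : C → Val)
    (G G' : Addr → Val) (R R' : TID → Reg → Val)
    (P P' : TID → ThreadProg C Reg Addr TID)
    (h : Steps op κ ⟨G, R, P⟩ ⟨G', R', P'⟩) (X : MemEvs Addr TID) :
    (∃ X' : MemEvs Addr TID, CSteps op κ (.ok X ⟨G, R, P⟩) (.ok X' ⟨G', R', P'⟩)) ∨
      CSteps op κ (.ok X ⟨G, R, P⟩) .err := by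
  exact csteps_of_steps op κ h X

end Volta
end

section
/- Erasure of checking: if (X, G, R, P) ↪* (X', G', R', P') in the checked dynamics of the language L, then (G, R, P) →* (G', R', P') in the unchecked dynamics. -/
namespace Volta

theorem TStep_of_CTStep
    {Val C Reg Addr TID : Type} [DecidableEq Reg] [DecidableEq Addr] [DecidableEq TID]
    {op : Val → Val → Val} {κ : C → Val} {i : TID}
    {X : MemEvs Addr TID} {G : Addr → Val} {R : Reg → Val} {T : ThreadProg C Reg Addr TID}
    {X' : MemEvs Addr TID} {G' : Addr → Val} {R' : Reg → Val} {T' : ThreadProg C Reg Addr TID}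
    (h : CTStep op κ i X G R T (.ok X' G' R' T')) :
    TStep op κ G R T G' R' T' := by
  cases h <;> constructor

theorem Step_of_CStep
    {Val C Reg Addr TID : Type} [DecidableEq Reg] [DecidableEq Addr] [DecidableEq TID]
    {op : Val → Val → Val} {κ : C → Val}
    {x y : CConfig Val C Reg Addr TID}
    (h : CStep op κ x y) :
    ∀ {X : MemEvs Addr TID} {c : Config Val C Reg Addr TID}
      {X' : MemEvs Addr TID} {c' : Config Val C Reg Addr TID},
      x = .ok X c → y = .ok X' c' → Step op κ c c' := by
  cases h with
  | schd hts =>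
    intro X c X' c' hx hy
    cases hx; cases hy
    exact Step.schd (TStep_of_CTStep hts)
  | schdBad hts => intro X c X' c' hx hy; cases hy
  | sync h1 h2 =>
    intro X c X' c' hx hy
    cases hx
    injection hy with h3 h4
    subst h4
    exact Step.sync h1 h2

theorem steps_of_csteps
    {Val C Reg Addr TID : Type} [DecidableEq Reg] [DecidableEq Addr] [DecidableEq TID]
    {op : Val → Val → Val} {κ : C → Val}
    {x y : CConfig Val C Reg Addr TID}
    (h : CSteps op κ x y) :
    ∀ {X : MemEvs Addr TID} {c : Config Val C Reg Addr TID}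
      {X' : MemEvs Addr TID} {c' : Config Val C Reg Addr TID},
      x = .ok X c → y = .ok X' c' → Steps op κ c c' := by
  induction h using Relation.ReflTransGen.head_induction_on with
  | refl =>
    intro X c X' c' hx hy
    rw [hx] at hy
    injection hy with _ h4
    subst h4
    exact Relation.ReflTransGen.refl
  | head hstep _ ih =>
    intro X c X' c' hx hy
    subst hx
    cases hstep with
    | schd hts =>
      exact Relation.ReflTransGen.head (Step.schd (TStep_of_CTStep hts)) (ih rfl hy)
    | schdBad hts =>
      exfalso
      -- from err, no further steps, so y = err, contradicting hy
      rename_i h'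
      have : ∀ z, CSteps op κ (CConfig.err : CConfig Val C Reg Addr TID) z →
          z = CConfig.err := by
        intro z hz
        rcases Relation.ReflTransGen.cases_head hz with rfl | ⟨w, hw, _⟩
        · rfl
        · cases hw
      have := this _ h'
      rw [hy] at this
      cases this
    | sync h1 h2 =>
      exact Relation.ReflTransGen.head (Step.sync h1 h2) (ih rfl hy)

/-- **Erasure of checking**: if `(X, G, R, P) ↪* (X', G', R', P')` in the
checked dynamics, then `(G, R, P) →* (G', R', P')` in the unchecked dynamics. -/
theorem unchecked_of_checked
    {Val C Reg Addr TID : Type} [DecidableEq Reg] [DecidableEq Addr] [DecidableEq TID]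
    (op : Val → Val → Val) (κ : C → Val)
    (X X' : MemEvs Addr TID) (G G' : Addr → Val) (R R' : TID → Reg → Val)
    (P P' : TID → ThreadProg C Reg Addr TID)
    (h : CSteps op κ (.ok X ⟨G, R, P⟩) (.ok X' ⟨G', R', P'⟩)) :
    Steps op κ ⟨G, R, P⟩ ⟨G', R', P'⟩ :=
  steps_of_csteps h rfl rfl

end Volta
end

section
/- Race detection is independent of initial values: in the language L, for every memory-event context X and program P, if (X, G₁, R₁, P) ↪↓ ⊥ for some shared memory G₁ and register files R₁, then (X, G₂, R₂, P) ↪↓ ⊥ for every shared memory G₂ and register files R₂. -/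
namespace Volta

/-- **Race detection is independent of initial values**: for every memory-event
context `X` and program `P`, if `(X, G₁, R₁, P) ↪↓ ⊥` for some shared memory
`G₁` and register files `R₁`, then `(X, G₂, R₂, P) ↪↓ ⊥` for every shared
memory `G₂` and register files `R₂`. -/
theorem race_detection_independent_of_values
    {Val C Reg Addr TID : Type} [DecidableEq Reg] [DecidableEq Addr] [DecidableEq TID]
    (op : Val → Val → Val) (κ : C → Val)
    (X : MemEvs Addr TID) (P : TID → ThreadProg C Reg Addr TID)
    (G₁ : Addr → Val) (R₁ : TID → Reg → Val)
    (h : CSteps op κ (.ok X ⟨G₁, R₁, P⟩) .err) :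
    ∀ (G₂ : Addr → Val) (R₂ : TID → Reg → Val),
      CSteps op κ (.ok X ⟨G₂, R₂, P⟩) .err := by
  suffices H : ∀ s, CSteps op κ s .err →
      ∀ X c, s = CConfig.ok X c → ∀ (G₂ : Addr → Val) (R₂ : TID → Reg → Val),
        CSteps op κ (.ok X ⟨G₂, R₂, c.P⟩) .err by
    intro G₂ R₂
    exact H _ h X ⟨G₁, R₁, P⟩ rfl G₂ R₂
  intro s hs
  induction hs using Relation.ReflTransGen.head_induction_on with
  | refl => intro X c heq; cases heq
  | head hstep htail ih =>
    intro X c heq G₂ R₂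
    subst heq
    cases hstep with
    | schd hts =>
      rename_i c i X' G' R' T'
      generalize hP : c.P i = p at hts
      cases hts with
      | const =>
        rename_i r c₀
        exact Relation.ReflTransGen.head
          (CStep.schd (c := ⟨G₂, R₂, c.P⟩) (i := i) (hP ▸ CTStep.const))
          (ih _ _ rfl _ _)
      | binop =>
        rename_i r r₁ r₂
        exact Relation.ReflTransGen.head
          (CStep.schd (c := ⟨G₂, R₂, c.P⟩) (i := i) (hP ▸ CTStep.binop))
          (ih _ _ rfl _ _)
      | copy =>
        rename_i r r'
        exact Relation.ReflTransGen.head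
          (CStep.schd (c := ⟨G₂, R₂, c.P⟩) (i := i) (hP ▸ CTStep.copy))
          (ih _ _ rfl _ _)
      | read hw =>
        rename_i r g
        exact Relation.ReflTransGen.head
          (CStep.schd (c := ⟨G₂, R₂, c.P⟩) (i := i) (hP ▸ CTStep.read hw))
          (ih _ _ rfl _ _)
      | write hr hw =>
        rename_i g r
        exact Relation.ReflTransGen.head
          (CStep.schd (c := ⟨G₂, R₂, c.P⟩) (i := i) (hP ▸ CTStep.write hr hw))
          (ih _ _ rfl _ _)
    | schdBad hts =>
      rename_i c i
      generalize hP : c.P i = p at hts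
      cases hts with
      | readBad hw =>
        rename_i r g T
        exact Relation.ReflTransGen.head
          (CStep.schdBad (c := ⟨G₂, R₂, c.P⟩) (i := i) (hP ▸ CTStep.readBad hw))
          htail
      | writeBad hbad =>
        rename_i g r T
        exact Relation.ReflTransGen.head
          (CStep.schdBad (c := ⟨G₂, R₂, c.P⟩) (i := i) (hP ▸ CTStep.writeBad hbad))
          htail
    | sync h1 h2 =>
      rename_i c I P'
      exact Relation.ReflTransGen.head
        (CStep.sync (c := ⟨G₂, R₂, c.P⟩) h1 h2)
        (ih (syncMem I X) ⟨c.G, c.R, P'⟩ rfl _ _)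

end Volta
end

section
/- Data Race Freedom (soundness of race detection): if a program P of the language L has a data race, then for every memory-event context X, shared memory G, and register files R, the checked dynamics errors: (X, G, R, P) ↪↓ ⊥. -/
namespace Volta

section Aux

variable {Val C Reg Addr TID : Type} [DecidableEq Reg] [DecidableEq Addr] [DecidableEq TID]
variable (op : Val → Val → Val) (κ : C → Val)

private lemma sim_one {c c' : Config Val C Reg Addr TID}
    (h : Step op κ c c') (X : MemEvs Addr TID) (d : Config Val C Reg Addr TID)
    (hP : d.P = c.P) :
    CStep op κ (.ok X d) .err ∨
      ∃ X' d', CStep op κ (.ok X d) (.ok X' d') ∧ d'.P = c'.P := by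
  cases h with
  | @schd i G' R' T' ht =>
    have hpi : d.P i = c.P i := by rw [hP]
    revert hpi
    generalize c.P i = Ti at ht ⊢
    intro hpi
    cases ht with
    | @const r cst T =>
      exact .inr ⟨X, _, CStep.schd (hpi ▸ CTStep.const), by simp [hP]⟩
    | @binop r r₁ r₂ T =>
      exact .inr ⟨X, _, CStep.schd (hpi ▸ CTStep.binop), by simp [hP]⟩
    | @copy r r' T =>
      exact .inr ⟨X, _, CStep.schd (hpi ▸ CTStep.copy), by simp [hP]⟩
    | @read r g T =>
      by_cases hw : noRacingWr i (X g).2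
      · exact .inr ⟨_, _, CStep.schd (hpi ▸ CTStep.read hw), by simp [hP]⟩
      · exact .inl (CStep.schdBad (hpi ▸ CTStep.readBad hw))
    | @write g r T =>
      by_cases hc : noRacingRd i (X g).1 ∧ noRacingWr i (X g).2
      · exact .inr ⟨_, _, CStep.schd (hpi ▸ CTStep.write hc.1 hc.2), by simp [hP]⟩
      · exact .inl (CStep.schdBad (hpi ▸ CTStep.writeBad (not_and_or.mp hc)))
  | @sync I P' h1 h2 =>
    exact .inr ⟨syncMem I X, ⟨d.G, d.R, P'⟩,
      CStep.sync (fun i hi => (h1 i hi).trans (hP ▸ rfl))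
        (fun i hi => by rw [hP]; exact h2 i hi), rfl⟩

private lemma sim_many {c₀ c : Config Val C Reg Addr TID}
    (h : Steps op κ c₀ c) (X : MemEvs Addr TID) (d : Config Val C Reg Addr TID)
    (hP : d.P = c₀.P) :
    CSteps op κ (.ok X d) .err ∨
      ∃ X' d', CSteps op κ (.ok X d) (.ok X' d') ∧ d'.P = c.P := by
  unfold Steps at h
  induction h with
  | refl => exact .inr ⟨X, d, Relation.ReflTransGen.refl, hP⟩
  | tail h1 hs ih =>
    rcases ih with herr | ⟨X', d', hcs, hP'⟩
    · exact .inl herr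
    rcases sim_one op κ hs X' d' hP' with herr | ⟨X'', d'', hc, hP''⟩
    · exact .inl (hcs.tail herr)
    · exact .inr ⟨X'', d'', hcs.tail hc, hP''⟩

private lemma race_err {d : Config Val C Reg Addr TID} {i j : TID} {g : Addr}
    (hij : i ≠ j)
    (hi : ∃ r T, d.P i = ThreadProg.seq (.write g r) T)
    (hj : (∃ r T, d.P j = ThreadProg.seq (.read r g) T) ∨
          (∃ r T, d.P j = ThreadProg.seq (.write g r) T))
    (X : MemEvs Addr TID) :
    CSteps op κ (.ok X d) .err := by
  obtain ⟨r, T, hpi⟩ := hi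
  by_cases hc : noRacingRd i (X g).1 ∧ noRacingWr i (X g).2
  · -- first the write by i succeeds, then the access by j errors
    have step1 : CStep op κ (.ok X d)
        (.ok (Function.update X g ((X g).1, (i, (Set.univ : Set TID))))
          ⟨Function.update d.G g (d.R i r), Function.update d.R i (d.R i),
            Function.update d.P i T⟩) :=
      CStep.schd (hpi ▸ CTStep.write hc.1 hc.2)
    set X' : MemEvs Addr TID :=
      Function.update X g ((X g).1, (i, (Set.univ : Set TID))) with hX'
    have hX'g : (X' g).2 = (i, (Set.univ : Set TID)) := by
      simp [hX', Function.update_self]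
    have hnw : ¬ noRacingWr j (X' g).2 := by
      rw [hX'g]
      intro hh
      rcases hh with hh | hh
      · exact hij hh.symm
      · exact hh (Set.mem_univ j)
    have hpj' : Function.update d.P i T j = d.P j :=
      Function.update_of_ne (Ne.symm hij) _ _
    have step2 : CStep op κ (.ok X'
        ⟨Function.update d.G g (d.R i r), Function.update d.R i (d.R i),
          Function.update d.P i T⟩) .err := by
      rcases hj with ⟨r', T', hpj⟩ | ⟨r', T', hpj⟩
      · exact CStep.schdBad (i := j)
          (show CTStep op κ j X' _ _ (Function.update d.P i T j) _ by
            rw [hpj', hpj]; exact CTStep.readBad hnw)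
      · exact CStep.schdBad (i := j)
          (show CTStep op κ j X' _ _ (Function.update d.P i T j) _ by
            rw [hpj', hpj]; exact CTStep.writeBad (Or.inr hnw))
    exact Relation.ReflTransGen.head step1 (Relation.ReflTransGen.single step2)
  · exact Relation.ReflTransGen.single
      (CStep.schdBad (hpi ▸ CTStep.writeBad (not_and_or.mp hc)))

end Aux


/-- **Data Race Freedom** (soundness of race detection): if a program `P` has a
data race, then for every memory-event context `X`, shared memory `G`, and
register files `R`, the checked dynamics errors: `(X, G, R, P) ↪↓ ⊥`. -/
theorem data_race_freedom
    {Val C Reg Addr TID : Type} [DecidableEq Reg] [DecidableEq Addr] [DecidableEq TID]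
    (op : Val → Val → Val) (κ : C → Val)
    (P : TID → ThreadProg C Reg Addr TID)
    (h : HasDataRace op κ P) :
    ∀ (X : MemEvs Addr TID) (G : Addr → Val) (R : TID → Reg → Val),
      CSteps op κ (.ok X ⟨G, R, P⟩) .err := by
  obtain ⟨G₀, R₀, c, c₁, c₁', c₂, c₂', i, j, g, wi, wj, hij, hw, hsteps, ai, _, aj, _⟩ := h
  intro X G R
  rcases sim_many op κ hsteps X ⟨G, R, P⟩ rfl with herr | ⟨X', d, hcs, hPd⟩
  · exact herr
  have hi : (∃ r T, c.P i = ThreadProg.seq (.read r g) T) ∨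
      (∃ r T, c.P i = ThreadProg.seq (.write g r) T) := by
    cases ai with
    | read h => exact .inl ⟨_, _, h⟩
    | write h => exact .inr ⟨_, _, h⟩
  have hj : (∃ r T, c.P j = ThreadProg.seq (.read r g) T) ∨
      (∃ r T, c.P j = ThreadProg.seq (.write g r) T) := by
    cases aj with
    | read h => exact .inl ⟨_, _, h⟩
    | write h => exact .inr ⟨_, _, h⟩
  have hone : (∃ r T, c.P i = ThreadProg.seq (.write g r) T) ∨
      (∃ r T, c.P j = ThreadProg.seq (.write g r) T) := by
    rcases hw with hw | hw
    · subst hw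
      cases ai with
      | write h => exact .inl ⟨_, _, h⟩
    · subst hw
      cases aj with
      | write h => exact .inr ⟨_, _, h⟩
  rcases hone with ⟨r, T, hpw⟩ | ⟨r, T, hpw⟩
  · refine Relation.ReflTransGen.trans hcs (race_err op κ hij ⟨r, T, hPd ▸ hpw⟩ ?_ X')
    rcases hj with ⟨r', T', h'⟩ | ⟨r', T', h'⟩
    · exact .inl ⟨r', T', hPd ▸ h'⟩
    · exact .inr ⟨r', T', hPd ▸ h'⟩
  · refine Relation.ReflTransGen.trans hcs (race_err op κ hij.symm ⟨r, T, hPd ▸ hpw⟩ ?_ X')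
    rcases hi with ⟨r', T', h'⟩ | ⟨r', T', h'⟩
    · exact .inl ⟨r', T', hPd ▸ h'⟩
    · exact .inr ⟨r', T', hPd ▸ h'⟩

end Volta
end

section
/- The unchecked dynamics commutes with value maps: for all maps φ : (𝕍, ⊕) → (ℝ, ⊕) (functions satisfying φ(v₁ ⊕ v₂) = φ(v₁) ⊕ φ(v₂), applied pointwise to shared memory and register files), if (G, R, P) →* (G', R', P') over symbolic values 𝕍 in the language L, then (φ(G), φ(R), P) →* (φ(G'), φ(R'), P') over ℝ. -/
namespace Volta

private lemma update_comp {α β γ : Type} [DecidableEq α] (φ : β → γ) (f : α → β)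
    (a : α) (b : β) :
    (fun x => φ (Function.update f a b x)) = Function.update (fun x => φ (f x)) a (φ b) := by
  funext x
  by_cases h : x = a <;> simp [Function.update_apply, h]

private def mapCfg {V W C Reg Addr TID : Type} (φ : V → W)
    (c : Config V C Reg Addr TID) : Config W C Reg Addr TID :=
  ⟨fun g => φ (c.G g), fun i r => φ (c.R i r), c.P⟩

private lemma tstep_map
    {V W C Reg Addr TID : Type} [DecidableEq Reg] [DecidableEq Addr] [DecidableEq TID]
    (opV : V → V → V) (κV : C → V) (opW : W → W → W) (κW : C → W)
    (φ : V → W)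
    (hop : ∀ v₁ v₂ : V, φ (opV v₁ v₂) = opW (φ v₁) (φ v₂))
    (hκ : ∀ c : C, φ (κV c) = κW c)
    {G : Addr → V} {R : Reg → V} {T : ThreadProg C Reg Addr TID} {G' R' T'}
    (h : TStep opV κV G R T G' R' T') :
    TStep opW κW (fun g => φ (G g)) (fun r => φ (R r)) T
      (fun g => φ (G' g)) (fun r => φ (R' r)) T' := by
  cases h with
  | const => rw [update_comp, hκ]; exact TStep.const
  | binop => rw [update_comp, hop]; exact TStep.binop
  | copy => rw [update_comp]; exact TStep.copy
  | read => rw [update_comp]; exact TStep.read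
  | write => rw [update_comp]; exact TStep.write

private lemma step_map
    {V W C Reg Addr TID : Type} [DecidableEq Reg] [DecidableEq Addr] [DecidableEq TID]
    (opV : V → V → V) (κV : C → V) (opW : W → W → W) (κW : C → W)
    (φ : V → W)
    (hop : ∀ v₁ v₂ : V, φ (opV v₁ v₂) = opW (φ v₁) (φ v₂))
    (hκ : ∀ c : C, φ (κV c) = κW c)
    {c c' : Config V C Reg Addr TID}
    (h : Step opV κV c c') :
    Step opW κW (mapCfg φ c) (mapCfg φ c') := by
  cases h with
  | @schd i G' R' T' ht =>
      have := Step.schd (c := mapCfg φ c) (i := i)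
        (tstep_map opV κV opW κW φ hop hκ ht)
      have heq : (fun j r => φ (Function.update c.R i R' j r)) =
          Function.update (fun j r => φ (c.R j r)) i (fun r => φ (R' r)) := by
        funext j r
        by_cases h : j = i <;> simp [Function.update_apply, h]
      simpa [mapCfg, heq] using this
  | sync h1 h2 =>
      exact Step.sync (c := mapCfg φ c) h1 h2

private lemma steps_map_aux
    {V W C Reg Addr TID : Type} [DecidableEq Reg] [DecidableEq Addr] [DecidableEq TID]
    (opV : V → V → V) (κV : C → V) (opW : W → W → W) (κW : C → W)
    (φ : V → W)
    (hop : ∀ v₁ v₂ : V, φ (opV v₁ v₂) = opW (φ v₁) (φ v₂))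
    (hκ : ∀ c : C, φ (κV c) = κW c)
    {c c' : Config V C Reg Addr TID}
    (h : Steps opV κV c c') :
    Steps opW κW (mapCfg φ c) (mapCfg φ c') := by
  induction h with
  | refl => exact Relation.ReflTransGen.refl
  | tail _ hs ih => exact ih.tail (step_map opV κV opW κW φ hop hκ hs)

/-- The unchecked dynamics commutes with value maps: for all maps
`φ : (𝕍, ⊕) → (ℝ, ⊕)` (functions commuting with the value operations, applied
pointwise to shared memory and register files), if `(G, R, P) →* (G', R', P')`
over symbolic values `𝕍`, then `(φ(G), φ(R), P) →* (φ(G'), φ(R'), P')` over `ℝ`. -/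
theorem steps_map
    {V C Reg Addr TID : Type} [DecidableEq Reg] [DecidableEq Addr] [DecidableEq TID]
    (opV : V → V → V) (κV : C → V) (opR : ℝ → ℝ → ℝ) (κR : C → ℝ)
    (φ : V → ℝ)
    (hop : ∀ v₁ v₂ : V, φ (opV v₁ v₂) = opR (φ v₁) (φ v₂))
    (hκ : ∀ c : C, φ (κV c) = κR c)
    (G G' : Addr → V) (R R' : TID → Reg → V)
    (P P' : TID → ThreadProg C Reg Addr TID)
    (h : Steps opV κV ⟨G, R, P⟩ ⟨G', R', P'⟩) :
    Steps opR κR ⟨fun g => φ (G g), fun i r => φ (R i r), P⟩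
      ⟨fun g => φ (G' g), fun i r => φ (R' i r), P'⟩ :=
  steps_map_aux opV κV opR κR φ hop hκ h

end Volta
end

section
/- Determinacy up to data races: in the language L, if (G, R, P) ↓ (G₁, R₁) and (G, R, P) ↓ (G₂, R₂), then either (G₁, R₁) = (G₂, R₂), or for every memory-event context X one has (X, G, R, P) ↪↓ ⊥. -/
namespace Volta

section Aux

set_option linter.unusedSectionVars false

variable {Val C Reg Addr TID : Type}
variable [DecidableEq Reg] [DecidableEq Addr] [DecidableEq TID]
variable (op : Val → Val → Val) (κ : C → Val)

/-- Thread `i` is poised to access address `g` (write if `w = true`). -/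
def Poised (i : TID) (g : Addr) : Bool → Config Val C Reg Addr TID → Prop
  | true, c => ∃ r T, c.P i = .seq (.write g r) T
  | false, c => ∃ r T, c.P i = .seq (.read r g) T

/-- There is an immediate race: two distinct threads poised at the same
address, the first one a writer. -/
def Racy (c : Config Val C Reg Addr TID) : Prop :=
  ∃ i j g wj, i ≠ j ∧ Poised i g true c ∧ Poised j g wj c

lemma tstep_det {G : Addr → Val} {R : Reg → Val} {T T₁ T₂ : ThreadProg C Reg Addr TID}
    {G₁ G₂ : Addr → Val} {R₁ R₂ : Reg → Val}
    (h₁ : TStep op κ G R T G₁ R₁ T₁) (h₂ : TStep op κ G R T G₂ R₂ T₂) :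
    G₁ = G₂ ∧ R₁ = R₂ ∧ T₁ = T₂ := by
  cases h₁ <;> cases h₂ <;> exact ⟨rfl, rfl, rfl⟩

/-- One checked step simulating an unchecked step (or an error). -/
lemma sim_step {c c' : Config Val C Reg Addr TID} (h : Step op κ c c') :
    ∀ X : MemEvs Addr TID,
      CStep op κ (.ok X c) .err ∨ ∃ X', CStep op κ (.ok X c) (.ok X' c') := by
  intro X
  cases h with
  | @schd i G' R' T' t =>
    generalize hPi : c.P i = Ti at t
    cases t with
    | const =>
      refine Or.inr ⟨X, CStep.schd ?_⟩; rw [hPi]; exact CTStep.const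
    | binop =>
      refine Or.inr ⟨X, CStep.schd ?_⟩; rw [hPi]; exact CTStep.binop
    | copy =>
      refine Or.inr ⟨X, CStep.schd ?_⟩; rw [hPi]; exact CTStep.copy
    | @read r g T =>
      by_cases hw : noRacingWr i ((X g).2)
      · refine Or.inr ⟨Function.update X g
          (Function.update (X g).1 i (Set.univ : Set TID), (X g).2), CStep.schd ?_⟩
        rw [hPi]; exact CTStep.read hw
      · refine Or.inl (CStep.schdBad (i := i) ?_); rw [hPi]; exact CTStep.readBad hw
    | @write g r T =>
      by_cases hr : noRacingRd i ((X g).1)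
      · by_cases hw : noRacingWr i ((X g).2)
        · refine Or.inr ⟨Function.update X g ((X g).1, (i, (Set.univ : Set TID))),
            CStep.schd ?_⟩
          rw [hPi]; exact CTStep.write hr hw
        · refine Or.inl (CStep.schdBad (i := i) ?_); rw [hPi]
          exact CTStep.writeBad (Or.inr hw)
      · refine Or.inl (CStep.schdBad (i := i) ?_); rw [hPi]
        exact CTStep.writeBad (Or.inl hr)
  | sync hout hin => exact Or.inr ⟨_, CStep.sync hout hin⟩

lemma sim_steps {c c' : Config Val C Reg Addr TID} (h : Steps op κ c c') :
    ∀ X : MemEvs Addr TID,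
      CSteps op κ (.ok X c) .err ∨ ∃ X', CSteps op κ (.ok X c) (.ok X' c') := by
  induction h with
  | refl => exact fun X => Or.inr ⟨X, Relation.ReflTransGen.refl⟩
  | tail hs h1 ih =>
    intro X
    rcases ih X with herr | ⟨X₁, hok⟩
    · exact Or.inl herr
    · rcases sim_step op κ h1 X₁ with herr | ⟨X₂, hstep⟩
      · exact Or.inl (hok.tail herr)
      · exact Or.inr ⟨X₂, hok.tail hstep⟩

/-- From a racy configuration, the checked semantics can reach `⊥`. -/
lemma racy_err {c : Config Val C Reg Addr TID} (h : Racy c) :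
    ∀ X : MemEvs Addr TID, CSteps op κ (.ok X c) .err := by
  classical
  obtain ⟨i, j, g, wj, hij, ⟨r, T, hPi⟩, hj⟩ := h
  intro X
  by_cases hr : noRacingRd i ((X g).1)
  · by_cases hw : noRacingWr i ((X g).2)
    · -- perform the write by i, then j's access errs
      have s₁ : CStep op κ (.ok X c)
          (.ok (Function.update X g ((X g).1, (i, (Set.univ : Set TID))))
            ⟨Function.update c.G g (c.R i r), Function.update c.R i (c.R i),
              Function.update c.P i T⟩) := by
        refine CStep.schd (i := i) ?_
        rw [hPi]; exact CTStep.write hr hw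
      set X' := Function.update X g ((X g).1, (i, (Set.univ : Set TID))) with hX'
      have hX'g : (X' g).2 = (i, (Set.univ : Set TID)) := by
        rw [hX', Function.update_self]
      have hnw : ¬ noRacingWr j ((X' g).2) := by
        rw [hX'g]
        intro hc
        rcases hc with hc | hc
        · exact hij (hc.symm)
        · exact hc (Set.mem_univ j)
      have s₂ : CStep op κ (.ok X'
          ⟨Function.update c.G g (c.R i r), Function.update c.R i (c.R i),
            Function.update c.P i T⟩) .err := by
        cases wj with
        | true =>
          obtain ⟨r', T', hPj⟩ := hj
          refine CStep.schdBad (i := j) ?_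
          show CTStep op κ j X' _ _ (Function.update c.P i T j) _
          rw [Function.update_of_ne (Ne.symm hij), hPj]
          exact CTStep.writeBad (Or.inr hnw)
        | false =>
          obtain ⟨r', T', hPj⟩ := hj
          refine CStep.schdBad (i := j) ?_
          show CTStep op κ j X' _ _ (Function.update c.P i T j) _
          rw [Function.update_of_ne (Ne.symm hij), hPj]
          exact CTStep.readBad hnw
      exact Relation.ReflTransGen.head s₁ (Relation.ReflTransGen.single s₂)
    · refine Relation.ReflTransGen.single (CStep.schdBad (i := i) ?_)
      rw [hPi]; exact CTStep.writeBad (Or.inr hw)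
  · refine Relation.ReflTransGen.single (CStep.schdBad (i := i) ?_)
    rw [hPi]; exact CTStep.writeBad (Or.inl hr)

end Aux

end Volta

namespace Volta

section Aux2

set_option linter.unusedSectionVars false

variable {Val C Reg Addr TID : Type}
variable [DecidableEq Reg] [DecidableEq Addr] [DecidableEq TID]
variable (op : Val → Val → Val) (κ : C → Val)

/-- Two scheduling steps of distinct threads can be joined, given the two
replayed thread steps that agree on the final memory. -/
lemma join_schd {c : Config Val C Reg Addr TID} {i j : TID} (hij : i ≠ j)
    {Ga Gb : Addr → Val} (Gd : Addr → Val) {Ra Rb : Reg → Val} {Ta Tb : ThreadProg C Reg Addr TID}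
    (tij : TStep op κ Ga (c.R j) (c.P j) Gd Rb Tb)
    (tji : TStep op κ Gb (c.R i) (c.P i) Gd Ra Ta) :
    ∃ d, Step op κ ⟨Ga, Function.update c.R i Ra, Function.update c.P i Ta⟩ d ∧
         Step op κ ⟨Gb, Function.update c.R j Rb, Function.update c.P j Tb⟩ d := by
  refine ⟨⟨Gd, Function.update (Function.update c.R i Ra) j Rb,
      Function.update (Function.update c.P i Ta) j Tb⟩, ?_, ?_⟩
  · have h1 : Step op κ ⟨Ga, Function.update c.R i Ra, Function.update c.P i Ta⟩
        ⟨Gd, Function.update (Function.update c.R i Ra) j Rb,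
          Function.update (Function.update c.P i Ta) j Tb⟩ := by
      refine Step.schd (i := j) ?_
      show TStep op κ Ga (Function.update c.R i Ra j) (Function.update c.P i Ta j) Gd Rb Tb
      rw [Function.update_of_ne (Ne.symm hij), Function.update_of_ne (Ne.symm hij)]
      exact tij
    exact h1
  · have h2 : Step op κ ⟨Gb, Function.update c.R j Rb, Function.update c.P j Tb⟩
        ⟨Gd, Function.update (Function.update c.R j Rb) i Ra,
          Function.update (Function.update c.P j Tb) i Ta⟩ := by
      refine Step.schd (i := i) ?_
      show TStep op κ Gb (Function.update c.R j Rb i) (Function.update c.P j Tb i) Gd Ra Ta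
      rw [Function.update_of_ne hij, Function.update_of_ne hij]
      exact tji
    rw [Function.update_comm hij (f := c.R), Function.update_comm hij (f := c.P)]
    exact h2

/-- A scheduling step and a sync step can be joined. -/
lemma join_schd_sync {c : Config Val C Reg Addr TID} {i : TID}
    {G' : Addr → Val} {R' : Reg → Val} {T' : ThreadProg C Reg Addr TID}
    (t : TStep op κ c.G (c.R i) (c.P i) G' R' T')
    {I : Set TID} {P' : TID → ThreadProg C Reg Addr TID}
    (hout : ∀ k ∉ I, P' k = c.P k)
    (hin : ∀ k ∈ I, (c.P k = .ret ∧ P' k = .ret) ∨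
      ∃ T, c.P k = .seq (.sync I) T ∧ P' k = T) :
    ∃ d, Step op κ ⟨G', Function.update c.R i R', Function.update c.P i T'⟩ d ∧
         Step op κ ⟨c.G, c.R, P'⟩ d := by
  have hiI : i ∉ I := by
    intro hiI
    rcases hin i hiI with ⟨h1, _⟩ | ⟨T, h1, _⟩ <;> rw [h1] at t <;> cases t
  refine ⟨⟨G', Function.update c.R i R', Function.update P' i T'⟩, ?_, ?_⟩
  · have h1 : Step op κ ⟨G', Function.update c.R i R', Function.update c.P i T'⟩
        ⟨G', Function.update c.R i R', Function.update P' i T'⟩ := by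
      refine Step.sync (I := I) ?_ ?_
      · intro k hk
        by_cases hki : k = i
        · subst hki; simp
        · show Function.update P' i T' k = Function.update c.P i T' k
          rw [Function.update_of_ne hki, Function.update_of_ne hki]
          exact hout k hk
      · intro k hk
        have hki : k ≠ i := fun h => hiI (h ▸ hk)
        show (Function.update c.P i T' k = .ret ∧ Function.update P' i T' k = .ret) ∨
          ∃ T, Function.update c.P i T' k = .seq (.sync I) T ∧ Function.update P' i T' k = T
        rw [Function.update_of_ne hki, Function.update_of_ne hki]
        exact hin k hk
    exact h1
  · have h2 : Step op κ ⟨c.G, c.R, P'⟩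
        ⟨G', Function.update c.R i R', Function.update P' i T'⟩ := by
      refine Step.schd (i := i) ?_
      show TStep op κ c.G (c.R i) (P' i) G' R' T'
      rw [hout i hiI]
      exact t
    exact h2

/-- No thread step from a finished thread. -/
lemma tstep_not_ret {G : Addr → Val} {R : Reg → Val}
    {G' : Addr → Val} {R' : Reg → Val} {T' : ThreadProg C Reg Addr TID}
    (t : TStep op κ G R (.ret : ThreadProg C Reg Addr TID) G' R' T') : False := by
  cases t

def Final (c : Config Val C Reg Addr TID) : Prop := ∀ i, c.P i = ThreadProg.ret

lemma final_step {c c' : Config Val C Reg Addr TID} (hf : Final c)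
    (h : Step op κ c c') : c'.G = c.G ∧ c'.R = c.R ∧ Final c' := by
  cases h with
  | @schd i G' R' T' t =>
    rw [hf i] at t
    exact absurd t (tstep_not_ret op κ)
  | @sync I P' hout hin =>
    refine ⟨rfl, rfl, fun k => ?_⟩
    by_cases hk : k ∈ I
    · rcases hin k hk with ⟨_, h2⟩ | ⟨T, h1, _⟩
      · exact h2
      · rw [hf k] at h1; cases h1
    · show P' k = ThreadProg.ret
      rw [hout k hk]; exact hf k

lemma final_steps {c c' : Config Val C Reg Addr TID} (hf : Final c)
    (h : Steps op κ c c') : c'.G = c.G ∧ c'.R = c.R ∧ Final c' := by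
  induction h with
  | refl => exact ⟨rfl, rfl, hf⟩
  | tail hs h1 ih =>
    obtain ⟨hG, hR, hF⟩ := ih
    obtain ⟨hG', hR', hF'⟩ := final_step op κ hF h1
    exact ⟨hG'.trans hG, hR'.trans hR, hF'⟩

lemma diamond {c c₁ c₂ : Config Val C Reg Addr TID}
    (h₁ : Step op κ c c₁) (h₂ : Step op κ c c₂) :
    c₁ = c₂ ∨ (∃ d, Step op κ c₁ d ∧ Step op κ c₂ d) ∨ Racy c := by
  cases h₁ with
  | @schd i Ga Ra Ta t₁ =>
    cases h₂ with
    | @schd j Gb Rb Tb t₂ =>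
      by_cases hij : i = j
      · subst hij
        obtain ⟨rfl, rfl, rfl⟩ := tstep_det op κ t₁ t₂
        exact Or.inl rfl
      · generalize hPi : c.P i = Ti at t₁
        generalize hPj : c.P j = Tj at t₂
        cases t₁ with
        | @const q1 cc1 T1 =>
          cases t₂ with
          | @const p1 dd1 T2 =>
            refine Or.inr (Or.inl (join_schd op κ hij (Gd := c.G) ?_ ?_))
            · show TStep op κ _ (c.R j) (c.P j) _ _ _
              rw [hPj]; exact TStep.const
            · show TStep op κ _ (c.R i) (c.P i) _ _ _
              rw [hPi]; exact TStep.const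
          | @binop p1 p2 p3 T2 =>
            refine Or.inr (Or.inl (join_schd op κ hij (Gd := c.G) ?_ ?_))
            · show TStep op κ _ (c.R j) (c.P j) _ _ _
              rw [hPj]; exact TStep.binop
            · show TStep op κ _ (c.R i) (c.P i) _ _ _
              rw [hPi]; exact TStep.const
          | @copy p1 p2 T2 =>
            refine Or.inr (Or.inl (join_schd op κ hij (Gd := c.G) ?_ ?_))
            · show TStep op κ _ (c.R j) (c.P j) _ _ _
              rw [hPj]; exact TStep.copy
            · show TStep op κ _ (c.R i) (c.P i) _ _ _
              rw [hPi]; exact TStep.const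
          | @read p1 g2 T2 =>
            refine Or.inr (Or.inl (join_schd op κ hij (Gd := c.G) ?_ ?_))
            · show TStep op κ _ (c.R j) (c.P j) _ _ _
              rw [hPj]; exact TStep.read
            · show TStep op κ _ (c.R i) (c.P i) _ _ _
              rw [hPi]; exact TStep.const
          | @write g2 p1 T2 =>
            refine Or.inr (Or.inl (join_schd op κ hij (Gd := Function.update c.G g2 (c.R j p1)) ?_ ?_))
            · show TStep op κ _ (c.R j) (c.P j) _ _ _
              rw [hPj]; exact TStep.write
            · show TStep op κ _ (c.R i) (c.P i) _ _ _
              rw [hPi]; exact TStep.const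
        | @binop q1 q2 q3 T1 =>
          cases t₂ with
          | @const p1 dd1 T2 =>
            refine Or.inr (Or.inl (join_schd op κ hij (Gd := c.G) ?_ ?_))
            · show TStep op κ _ (c.R j) (c.P j) _ _ _
              rw [hPj]; exact TStep.const
            · show TStep op κ _ (c.R i) (c.P i) _ _ _
              rw [hPi]; exact TStep.binop
          | @binop p1 p2 p3 T2 =>
            refine Or.inr (Or.inl (join_schd op κ hij (Gd := c.G) ?_ ?_))
            · show TStep op κ _ (c.R j) (c.P j) _ _ _
              rw [hPj]; exact TStep.binop
            · show TStep op κ _ (c.R i) (c.P i) _ _ _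
              rw [hPi]; exact TStep.binop
          | @copy p1 p2 T2 =>
            refine Or.inr (Or.inl (join_schd op κ hij (Gd := c.G) ?_ ?_))
            · show TStep op κ _ (c.R j) (c.P j) _ _ _
              rw [hPj]; exact TStep.copy
            · show TStep op κ _ (c.R i) (c.P i) _ _ _
              rw [hPi]; exact TStep.binop
          | @read p1 g2 T2 =>
            refine Or.inr (Or.inl (join_schd op κ hij (Gd := c.G) ?_ ?_))
            · show TStep op κ _ (c.R j) (c.P j) _ _ _
              rw [hPj]; exact TStep.read
            · show TStep op κ _ (c.R i) (c.P i) _ _ _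
              rw [hPi]; exact TStep.binop
          | @write g2 p1 T2 =>
            refine Or.inr (Or.inl (join_schd op κ hij (Gd := Function.update c.G g2 (c.R j p1)) ?_ ?_))
            · show TStep op κ _ (c.R j) (c.P j) _ _ _
              rw [hPj]; exact TStep.write
            · show TStep op κ _ (c.R i) (c.P i) _ _ _
              rw [hPi]; exact TStep.binop
        | @copy q1 q2 T1 =>
          cases t₂ with
          | @const p1 dd1 T2 =>
            refine Or.inr (Or.inl (join_schd op κ hij (Gd := c.G) ?_ ?_))
            · show TStep op κ _ (c.R j) (c.P j) _ _ _
              rw [hPj]; exact TStep.const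
            · show TStep op κ _ (c.R i) (c.P i) _ _ _
              rw [hPi]; exact TStep.copy
          | @binop p1 p2 p3 T2 =>
            refine Or.inr (Or.inl (join_schd op κ hij (Gd := c.G) ?_ ?_))
            · show TStep op κ _ (c.R j) (c.P j) _ _ _
              rw [hPj]; exact TStep.binop
            · show TStep op κ _ (c.R i) (c.P i) _ _ _
              rw [hPi]; exact TStep.copy
          | @copy p1 p2 T2 =>
            refine Or.inr (Or.inl (join_schd op κ hij (Gd := c.G) ?_ ?_))
            · show TStep op κ _ (c.R j) (c.P j) _ _ _
              rw [hPj]; exact TStep.copy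
            · show TStep op κ _ (c.R i) (c.P i) _ _ _
              rw [hPi]; exact TStep.copy
          | @read p1 g2 T2 =>
            refine Or.inr (Or.inl (join_schd op κ hij (Gd := c.G) ?_ ?_))
            · show TStep op κ _ (c.R j) (c.P j) _ _ _
              rw [hPj]; exact TStep.read
            · show TStep op κ _ (c.R i) (c.P i) _ _ _
              rw [hPi]; exact TStep.copy
          | @write g2 p1 T2 =>
            refine Or.inr (Or.inl (join_schd op κ hij (Gd := Function.update c.G g2 (c.R j p1)) ?_ ?_))
            · show TStep op κ _ (c.R j) (c.P j) _ _ _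
              rw [hPj]; exact TStep.write
            · show TStep op κ _ (c.R i) (c.P i) _ _ _
              rw [hPi]; exact TStep.copy
        | @read q1 g1 T1 =>
          cases t₂ with
          | @const p1 dd1 T2 =>
            refine Or.inr (Or.inl (join_schd op κ hij (Gd := c.G) ?_ ?_))
            · show TStep op κ _ (c.R j) (c.P j) _ _ _
              rw [hPj]; exact TStep.const
            · show TStep op κ _ (c.R i) (c.P i) _ _ _
              rw [hPi]; exact TStep.read
          | @binop p1 p2 p3 T2 =>
            refine Or.inr (Or.inl (join_schd op κ hij (Gd := c.G) ?_ ?_))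
            · show TStep op κ _ (c.R j) (c.P j) _ _ _
              rw [hPj]; exact TStep.binop
            · show TStep op κ _ (c.R i) (c.P i) _ _ _
              rw [hPi]; exact TStep.read
          | @copy p1 p2 T2 =>
            refine Or.inr (Or.inl (join_schd op κ hij (Gd := c.G) ?_ ?_))
            · show TStep op κ _ (c.R j) (c.P j) _ _ _
              rw [hPj]; exact TStep.copy
            · show TStep op κ _ (c.R i) (c.P i) _ _ _
              rw [hPi]; exact TStep.read
          | @read p1 g2 T2 =>
            refine Or.inr (Or.inl (join_schd op κ hij (Gd := c.G) ?_ ?_))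
            · show TStep op κ _ (c.R j) (c.P j) _ _ _
              rw [hPj]; exact TStep.read
            · show TStep op κ _ (c.R i) (c.P i) _ _ _
              rw [hPi]; exact TStep.read
          | @write g2 p1 T2 =>
            by_cases hg : g1 = g2
            · subst hg
              exact Or.inr (Or.inr ⟨j, i, g1, false, fun h => hij h.symm, ⟨p1, Tb, hPj⟩, ⟨q1, Ta, hPi⟩⟩)
            · refine Or.inr (Or.inl (join_schd op κ hij (Gd := Function.update c.G g2 (c.R j p1)) ?_ ?_))
              · show TStep op κ _ (c.R j) (c.P j) _ _ _
                rw [hPj]; exact TStep.write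
              · show TStep op κ _ (c.R i) (c.P i) _ _ _
                rw [hPi, ← Function.update_of_ne hg (c.R j p1) c.G]; exact TStep.read
        | @write g1 q1 T1 =>
          cases t₂ with
          | @const p1 dd1 T2 =>
            refine Or.inr (Or.inl (join_schd op κ hij (Gd := Function.update c.G g1 (c.R i q1)) ?_ ?_))
            · show TStep op κ _ (c.R j) (c.P j) _ _ _
              rw [hPj]; exact TStep.const
            · show TStep op κ _ (c.R i) (c.P i) _ _ _
              rw [hPi]; exact TStep.write
          | @binop p1 p2 p3 T2 =>
            refine Or.inr (Or.inl (join_schd op κ hij (Gd := Function.update c.G g1 (c.R i q1)) ?_ ?_))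
            · show TStep op κ _ (c.R j) (c.P j) _ _ _
              rw [hPj]; exact TStep.binop
            · show TStep op κ _ (c.R i) (c.P i) _ _ _
              rw [hPi]; exact TStep.write
          | @copy p1 p2 T2 =>
            refine Or.inr (Or.inl (join_schd op κ hij (Gd := Function.update c.G g1 (c.R i q1)) ?_ ?_))
            · show TStep op κ _ (c.R j) (c.P j) _ _ _
              rw [hPj]; exact TStep.copy
            · show TStep op κ _ (c.R i) (c.P i) _ _ _
              rw [hPi]; exact TStep.write
          | @read p1 g2 T2 =>
            by_cases hg : g1 = g2
            · subst hg
              exact Or.inr (Or.inr ⟨i, j, g1, false, hij, ⟨q1, Ta, hPi⟩, ⟨p1, Tb, hPj⟩⟩)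
            · refine Or.inr (Or.inl (join_schd op κ hij (Gd := Function.update c.G g1 (c.R i q1)) ?_ ?_))
              · show TStep op κ _ (c.R j) (c.P j) _ _ _
                rw [hPj, ← Function.update_of_ne (fun h => hg h.symm) (c.R i q1) c.G]; exact TStep.read
              · show TStep op κ _ (c.R i) (c.P i) _ _ _
                rw [hPi]; exact TStep.write
          | @write g2 p1 T2 =>
            by_cases hg : g1 = g2
            · subst hg
              exact Or.inr (Or.inr ⟨i, j, g1, true, hij, ⟨q1, Ta, hPi⟩, ⟨p1, Tb, hPj⟩⟩)
            · refine Or.inr (Or.inl (join_schd op κ hij (Gd := Function.update (Function.update c.G g1 (c.R i q1)) g2 (c.R j p1)) ?_ ?_))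
              · show TStep op κ _ (c.R j) (c.P j) _ _ _
                rw [hPj]; exact TStep.write
              · show TStep op κ _ (c.R i) (c.P i) _ _ _
                rw [hPi, Function.update_comm hg]; exact TStep.write
    | @sync I P' hout hin =>
      rcases join_schd_sync op κ t₁ hout hin with ⟨d, hd₁, hd₂⟩
      exact Or.inr (Or.inl ⟨d, hd₁, hd₂⟩)
  | @sync I P' hout hin =>
    cases h₂ with
    | @schd i Gb Rb Tb t₂ =>
      rcases join_schd_sync op κ t₂ hout hin with ⟨d, hd₁, hd₂⟩
      exact Or.inr (Or.inl ⟨d, hd₂, hd₁⟩)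
    | @sync J P'' hout₂ hin₂ =>
      by_cases hIJ : ∀ k, k ∈ I → k ∈ J → c.P k = ThreadProg.ret
      · -- join via the combined sync
        classical
        refine Or.inr (Or.inl ⟨⟨c.G, c.R, fun k => if k ∈ J then P'' k else P' k⟩, ?_, ?_⟩)
        · refine Step.sync (I := J) ?_ ?_
          · intro k hk
            show (if k ∈ J then P'' k else P' k) = P' k
            rw [if_neg hk]
          · intro k hk
            show (P' k = ThreadProg.ret ∧ (if k ∈ J then P'' k else P' k) = ThreadProg.ret) ∨
              ∃ T, P' k = .seq (.sync J) T ∧ (if k ∈ J then P'' k else P' k) = T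
            rw [if_pos hk]
            by_cases hkI : k ∈ I
            · have hret := hIJ k hkI hk
              have h1 : P' k = ThreadProg.ret := by
                rcases hin k hkI with ⟨_, h⟩ | ⟨T, h, _⟩
                · exact h
                · rw [hret] at h; cases h
              have h2 : P'' k = ThreadProg.ret := by
                rcases hin₂ k hk with ⟨_, h⟩ | ⟨T, h, _⟩
                · exact h
                · rw [hret] at h; cases h
              exact Or.inl ⟨h1, h2⟩
            · rw [hout k hkI]
              exact hin₂ k hk
        · refine Step.sync (I := I) ?_ ?_
          · intro k hk
            show (if k ∈ J then P'' k else P' k) = P'' k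
            by_cases hkJ : k ∈ J
            · rw [if_pos hkJ]
            · rw [if_neg hkJ, hout k hk, ← hout₂ k hkJ]
          · intro k hk
            show (P'' k = ThreadProg.ret ∧ (if k ∈ J then P'' k else P' k) = ThreadProg.ret) ∨
              ∃ T, P'' k = .seq (.sync I) T ∧ (if k ∈ J then P'' k else P' k) = T
            by_cases hkJ : k ∈ J
            · have hret := hIJ k hk hkJ
              have h1 : P' k = ThreadProg.ret := by
                rcases hin k hk with ⟨_, h⟩ | ⟨T, h, _⟩
                · exact h
                · rw [hret] at h; cases h
              have h2 : P'' k = ThreadProg.ret := by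
                rcases hin₂ k hkJ with ⟨_, h⟩ | ⟨T, h, _⟩
                · exact h
                · rw [hret] at h; cases h
              rw [if_pos hkJ]
              exact Or.inl ⟨h2, h2⟩
            · rw [if_neg hkJ, hout₂ k hkJ]
              exact hin k hk
      · -- the two syncs are the same barrier
        push_neg at hIJ
        obtain ⟨k, hkI, hkJ, hkret⟩ := hIJ
        have h1 : ∃ T, c.P k = .seq (.sync I) T := by
          rcases hin k hkI with ⟨h, _⟩ | ⟨T, h, _⟩
          · exact absurd h hkret
          · exact ⟨_, h⟩
        have h2 : ∃ T, c.P k = .seq (.sync J) T := by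
          rcases hin₂ k hkJ with ⟨h, _⟩ | ⟨T, h, _⟩
          · exact absurd h hkret
          · exact ⟨_, h⟩
        obtain ⟨T₁, e₁⟩ := h1
        obtain ⟨T₂, e₂⟩ := h2
        rw [e₁] at e₂
        have hJI : I = J := by
          injection e₂ with es _
          injection es with eI
        subst hJI
        left
        have : P' = P'' := by
          funext m
          by_cases hm : m ∈ I
          · rcases hin m hm with ⟨ha, hb⟩ | ⟨T, ha, hb⟩ <;>
              rcases hin₂ m hm with ⟨ha', hb'⟩ | ⟨T', ha', hb'⟩
            · rw [hb, hb']
            · rw [ha] at ha'; cases ha'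
            · rw [ha] at ha'; cases ha'
            · rw [ha] at ha'
              injection ha' with _ hT
              rw [hb, hb', hT]
          · rw [hout m hm, hout₂ m hm]
        rw [this]

end Aux2

end Volta

namespace Volta

section Aux3

set_option linter.unusedSectionVars false

variable {Val C Reg Addr TID : Type}
variable [DecidableEq Reg] [DecidableEq Addr] [DecidableEq TID]
variable (op : Val → Val → Val) (κ : C → Val)

lemma strip {c f : Config Val C Reg Addr TID} (h : Steps op κ c f) (hf : Final f) :
    ∀ c', Step op κ c c' →
      (∃ f', Steps op κ c' f' ∧ Final f' ∧ f'.G = f.G ∧ f'.R = f.R) ∨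
      (∃ d, Steps op κ c d ∧ Racy d) := by
  induction h using Relation.ReflTransGen.head_induction_on with
  | refl =>
    intro c' hs
    obtain ⟨hG, hR, hF⟩ := final_step op κ hf hs
    exact Or.inl ⟨c', Relation.ReflTransGen.refl, hF, hG, hR⟩
  | head hs htail ih =>
    intro c' hs'
    rcases diamond op κ hs hs' with heq | ⟨d, hd₁, hd₂⟩ | hrace
    · subst heq
      exact Or.inl ⟨f, htail, hf, rfl, rfl⟩
    · rcases ih d hd₁ with ⟨f', h1, h2, h3, h4⟩ | ⟨e, h1, h2⟩
      · exact Or.inl ⟨f', Relation.ReflTransGen.head hd₂ h1, h2, h3, h4⟩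
      · exact Or.inr ⟨e, Relation.ReflTransGen.head hs h1, h2⟩
    · exact Or.inr ⟨_, Relation.ReflTransGen.refl, hrace⟩

lemma confluence {c f₂ : Config Val C Reg Addr TID} (h₂ : Steps op κ c f₂)
    (hf₂ : Final f₂) :
    ∀ f₁, Steps op κ c f₁ → Final f₁ →
      (f₁.G = f₂.G ∧ f₁.R = f₂.R) ∨ ∃ d, Steps op κ c d ∧ Racy d := by
  induction h₂ using Relation.ReflTransGen.head_induction_on with
  | refl =>
    intro f₁ h₁ hf₁
    obtain ⟨hG, hR, _⟩ := final_steps op κ hf₂ h₁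
    exact Or.inl ⟨hG, hR⟩
  | head hs htail ih =>
    intro f₁ h₁ hf₁
    rcases strip op κ h₁ hf₁ _ hs with ⟨f₁', h1, h2, h3, h4⟩ | hrace
    · rcases ih f₁' h1 h2 with ⟨hG, hR⟩ | ⟨d, hd₁, hd₂⟩
      · exact Or.inl ⟨h3 ▸ hG, h4 ▸ hR⟩
      · exact Or.inr ⟨d, Relation.ReflTransGen.head hs hd₁, hd₂⟩
    · exact Or.inr hrace

end Aux3

end Volta

namespace Volta

/-- **Determinacy up to data races**: if `(G, R, P) ↓ (G₁, R₁)` and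
`(G, R, P) ↓ (G₂, R₂)`, then either `(G₁, R₁) = (G₂, R₂)`, or for every
memory-event context `X` one has `(X, G, R, P) ↪↓ ⊥`. -/
theorem determinacy_up_to_races
    {Val C Reg Addr TID : Type} [DecidableEq Reg] [DecidableEq Addr] [DecidableEq TID]
    (op : Val → Val → Val) (κ : C → Val)
    (G : Addr → Val) (R : TID → Reg → Val) (P : TID → ThreadProg C Reg Addr TID)
    (G₁ G₂ : Addr → Val) (R₁ R₂ : TID → Reg → Val)
    (h₁ : Terminates op κ ⟨G, R, P⟩ G₁ R₁)
    (h₂ : Terminates op κ ⟨G, R, P⟩ G₂ R₂) :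
    (G₁ = G₂ ∧ R₁ = R₂) ∨
      ∀ X : MemEvs Addr TID, CSteps op κ (.ok X ⟨G, R, P⟩) .err := by
  obtain ⟨P₁', hs₁, hf₁⟩ := h₁
  obtain ⟨P₂', hs₂, hf₂⟩ := h₂
  rcases confluence op κ hs₂ hf₂ _ hs₁ hf₁ with ⟨hG, hR⟩ | ⟨d, hd, hrace⟩
  · exact Or.inl ⟨hG, hR⟩
  · refine Or.inr fun X => ?_
    rcases sim_steps op κ hd X with herr | ⟨X', hok⟩
    · exact herr
    · exact hok.trans (racy_err op κ hrace X')

end Volta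
end
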